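/- arXiv:2005.04123 — 11 statements merged into one kernel-verified Lean document; each statement's English description precedes it below -/
import Mathlib

section
/- Every minimal-size CNF formula equivalent to a CNF formula A is a subset of the resolution closure of A, where size is the total number of literal occurrences. -/
abbrev Lit : Type := ℕ × Bool
abbrev Clause : Type := Finset Lit
abbrev Cnf : Type := Finset Clause

def Lit.negate (l : Lit) : Lit := (l.1, !l.2)

def litSat (M : ℕ → Bool) (l : Lit) : Prop := M l.1 = l.2

def clauseSat (M : ℕ → Bool) (c : Clause) : Prop := ∃ l ∈ c, litSat M l

def cnfSat (M : ℕ → Bool) (F : Cnf) : Prop := ∀ c ∈ F, clauseSat M c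

def ClTaut (c : Clause) : Prop := ∃ v : ℕ, (v, true) ∈ c ∧ (v, false) ∈ c

def cnfVars (F : Cnf) : Set ℕ := {v | ∃ c ∈ F, ∃ b, (v, b) ∈ c}

def isResolvent (c1 c2 r : Clause) (v : ℕ) : Prop :=
  (v, true) ∈ c1 ∧ (v, false) ∈ c2 ∧
    r = c1.erase (v, true) ∪ c2.erase (v, false)

inductive Deriv (F : Set Clause) : Clause → Prop
  | base {c : Clause} : c ∈ F → Deriv F c
  | step {c1 c2 r : Clause} {v : ℕ} : Deriv F c1 → Deriv F c2 →
      isResolvent c1 c2 r v → ¬ ClTaut r → Deriv F r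

def ResCn (F : Set Clause) : Set Clause := {c | Deriv F c}

def setSat (M : ℕ → Bool) (S : Set Clause) : Prop := ∀ c ∈ S, clauseSat M c

def setEntails (S : Set Clause) (c : Clause) : Prop :=
  ∀ M, setSat M S → clauseSat M c

def superRedundant (F : Cnf) (c : Clause) : Prop :=
  setEntails (ResCn ↑F \ {c}) c

def cnfSize (F : Cnf) : ℕ := ∑ c ∈ F, c.card

def cnfEquiv (F G : Cnf) : Prop := ∀ M, cnfSat M F ↔ cnfSat M G

/-! ### Auxiliary definitions and lemmas -/

def clVars (c : Clause) : Finset ℕ := c.image Prod.fst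

def cnfVarsF (F : Cnf) : Finset ℕ := F.sup clVars

lemma mem_clVars {c : Clause} {v : ℕ} : v ∈ clVars c ↔ ∃ b, (v, b) ∈ c := by
  simp only [clVars, Finset.mem_image]
  constructor
  · rintro ⟨⟨w, b⟩, hl, rfl⟩; exact ⟨b, hl⟩
  · rintro ⟨b, hb⟩; exact ⟨(v, b), hb, rfl⟩

lemma clauseSat_agree {M M' : ℕ → Bool} {c : Clause}
    (h : ∀ v ∈ clVars c, M v = M' v) (hs : clauseSat M c) : clauseSat M' c := by
  obtain ⟨l, hl, hsat⟩ := hs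
  refine ⟨l, hl, ?_⟩
  unfold litSat at *
  rw [← h l.1 (mem_clVars.2 ⟨l.2, hl⟩)]; exact hsat

lemma deriv_trans {F S : Set Clause} (hS : ∀ d ∈ S, Deriv F d) {c : Clause}
    (h : Deriv S c) : Deriv F c := by
  induction h with
  | base h => exact hS _ h
  | step _ _ hr ht ih1 ih2 => exact Deriv.step ih1 ih2 hr ht

lemma resolvent_sound {c1 c2 r : Clause} {v : ℕ} (hr : isResolvent c1 c2 r v)
    {M : ℕ → Bool} (h1 : clauseSat M c1) (h2 : clauseSat M c2) : clauseSat M r := by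
  obtain ⟨hv1, hv2, rfl⟩ := hr
  by_cases hv : M v = true
  · obtain ⟨l, hl, hsat⟩ := h2
    refine ⟨l, Finset.mem_union_right _ (Finset.mem_erase.2 ⟨?_, hl⟩), hsat⟩
    rintro rfl; rw [litSat] at hsat; simp at hsat; rw [hsat] at hv; simp at hv
  · obtain ⟨l, hl, hsat⟩ := h1
    refine ⟨l, Finset.mem_union_left _ (Finset.mem_erase.2 ⟨?_, hl⟩), hsat⟩
    rintro rfl; rw [litSat] at hsat; simp at hsat; exact hv hsat

lemma deriv_sound {F : Set Clause} {c : Clause} (h : Deriv F c) (M : ℕ → Bool)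
    (hM : ∀ d ∈ F, clauseSat M d) : clauseSat M c := by
  induction h with
  | base h => exact hM _ h
  | step _ _ hr _ ih1 ih2 => exact resolvent_sound hr ih1 ih2

lemma deriv_nontaut {F : Set Clause} (hF : ∀ d ∈ F, ¬ ClTaut d) {c : Clause}
    (h : Deriv F c) : ¬ ClTaut c := by
  induction h with
  | base h => exact hF _ h
  | step _ _ _ ht _ _ => exact ht

/-! ### Davis–Putnam variable elimination -/

open Classical in
noncomputable def DP (F : Cnf) (v : ℕ) : Cnf :=
  F.filter (fun c => (v, true) ∉ c ∧ (v, false) ∉ c) ∪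
  (((F ×ˢ F).filter (fun p => (v, true) ∈ p.1 ∧ (v, false) ∈ p.2)).image
      (fun p => p.1.erase (v, true) ∪ p.2.erase (v, false))).filter
    (fun r => ¬ ClTaut r)

lemma mem_DP {F : Cnf} {v : ℕ} {d : Clause} (h : d ∈ DP F v) :
    (d ∈ F ∧ (v, true) ∉ d ∧ (v, false) ∉ d) ∨
    (∃ c1 ∈ F, ∃ c2 ∈ F, isResolvent c1 c2 d v ∧ ¬ ClTaut d) := by
  classical
  rcases Finset.mem_union.1 h with h | h
  · left; simpa using Finset.mem_filter.1 h
  · right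
    obtain ⟨hd, ht⟩ := Finset.mem_filter.1 h
    obtain ⟨⟨c1, c2⟩, hp, rfl⟩ := Finset.mem_image.1 hd
    obtain ⟨hm, h1, h2⟩ := Finset.mem_filter.1 hp
    obtain ⟨hc1, hc2⟩ := Finset.mem_product.1 hm
    exact ⟨c1, hc1, c2, hc2, ⟨h1, h2, rfl⟩, ht⟩

lemma DP_deriv {F : Cnf} {v : ℕ} {d : Clause} (h : d ∈ DP F v) : Deriv ↑F d := by
  rcases mem_DP h with ⟨hd, _, _⟩ | ⟨c1, h1, c2, h2, hr, ht⟩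
  · exact Deriv.base hd
  · exact Deriv.step (Deriv.base h1) (Deriv.base h2) hr ht

lemma DP_nontaut {F : Cnf} (hF : ∀ d ∈ F, ¬ ClTaut d) {v : ℕ} {d : Clause}
    (h : d ∈ DP F v) : ¬ ClTaut d := deriv_nontaut (by exact_mod_cast hF) (DP_deriv h)

lemma DP_vars {F : Cnf} (hF : ∀ d ∈ F, ¬ ClTaut d) {v : ℕ} {d : Clause}
    (h : d ∈ DP F v) : clVars d ⊆ (cnfVarsF F).erase v := by
  rcases mem_DP h with ⟨hd, ht, hf⟩ | ⟨c1, h1, c2, h2, ⟨ht1, hf2, rfl⟩, _⟩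
  · intro w hw
    obtain ⟨b, hb⟩ := mem_clVars.1 hw
    refine Finset.mem_erase.2 ⟨?_, Finset.le_sup (f := clVars) hd hw⟩
    rintro rfl; cases b
    · exact hf hb
    · exact ht hb
  · intro w hw
    obtain ⟨b, hb⟩ := mem_clVars.1 hw
    rcases Finset.mem_union.1 hb with hb' | hb'
    · obtain ⟨hne, hbm⟩ := Finset.mem_erase.1 hb'
      refine Finset.mem_erase.2 ⟨?_, Finset.le_sup (f := clVars) h1 (mem_clVars.2 ⟨b, hbm⟩)⟩
      rintro rfl
      cases b
      · exact hF _ h1 ⟨_, ht1, hbm⟩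
      · exact hne rfl
    · obtain ⟨hne, hbm⟩ := Finset.mem_erase.1 hb'
      refine Finset.mem_erase.2 ⟨?_, Finset.le_sup (f := clVars) h2 (mem_clVars.2 ⟨b, hbm⟩)⟩
      rintro rfl
      cases b
      · exact hne rfl
      · exact hF _ h2 ⟨_, hbm, hf2⟩

lemma DP_sat {F : Cnf} {v : ℕ} {M : ℕ → Bool} (hM : cnfSat M (DP F v)) :
    ∃ b, cnfSat (Function.update M v b) F := by
  by_contra hcon
  push_neg at hcon
  have h1 := hcon true
  have h0 := hcon false
  rw [cnfSat] at h1 h0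
  push_neg at h1 h0
  obtain ⟨d1, hd1F, hs1⟩ := h1
  obtain ⟨d2, hd2F, hs2⟩ := h0
  have ht1 : (v, true) ∉ d1 := fun h => hs1 ⟨(v, true), h, by simp [litSat]⟩
  have hf2 : (v, false) ∉ d2 := fun h => hs2 ⟨(v, false), h, by simp [litSat]⟩
  have hf1 : (v, false) ∈ d1 := by
    by_contra hf
    classical
    have hmem : d1 ∈ DP F v :=
      Finset.mem_union_left _ (Finset.mem_filter.2 ⟨hd1F, ht1, hf⟩)
    refine hs1 (clauseSat_agree (fun w hw => ?_) (hM d1 hmem))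
    have hwv : w ≠ v := by
      rintro rfl
      obtain ⟨b, hb⟩ := mem_clVars.1 hw
      cases b
      · exact hf hb
      · exact ht1 hb
    exact (Function.update_of_ne hwv _ M).symm
  have ht2 : (v, true) ∈ d2 := by
    by_contra ht
    classical
    have hmem : d2 ∈ DP F v :=
      Finset.mem_union_left _ (Finset.mem_filter.2 ⟨hd2F, ht, hf2⟩)
    refine hs2 (clauseSat_agree (fun w hw => ?_) (hM d2 hmem))
    have hwv : w ≠ v := by
      rintro rfl
      obtain ⟨b, hb⟩ := mem_clVars.1 hw
      cases b
      · exact hf2 hb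
      · exact ht hb
    exact (Function.update_of_ne hwv _ M).symm
  set r : Clause := d2.erase (v, true) ∪ d1.erase (v, false) with hrdef
  have hrf : ¬ clauseSat M r := by
    rintro ⟨⟨w, b⟩, hl, hsat⟩
    rcases Finset.mem_union.1 hl with hl' | hl'
    · obtain ⟨hne, hld⟩ := Finset.mem_erase.1 hl'
      have hwv : w ≠ v := by
        rintro rfl; cases b
        · exact hf2 hld
        · exact hne rfl
      refine hs2 ⟨(w, b), hld, ?_⟩
      rw [litSat] at hsat ⊢
      simpa [Function.update_of_ne hwv] using hsat
    · obtain ⟨hne, hld⟩ := Finset.mem_erase.1 hl'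
      have hwv : w ≠ v := by
        rintro rfl; cases b
        · exact hne rfl
        · exact ht1 hld
      refine hs1 ⟨(w, b), hld, ?_⟩
      rw [litSat] at hsat ⊢
      simpa [Function.update_of_ne hwv] using hsat
  have hnt : ¬ ClTaut r := by
    rintro ⟨w, hwt, hwf⟩
    apply hrf
    by_cases h : M w = true
    · exact ⟨(w, true), hwt, h⟩
    · exact ⟨(w, false), hwf, by simpa [litSat] using h⟩
  classical
  have hrm : r ∈ DP F v := by
    refine Finset.mem_union_right _ (Finset.mem_filter.2 ⟨?_, hnt⟩)
    refine Finset.mem_image.2 ⟨(d2, d1), ?_, rfl⟩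
    exact Finset.mem_filter.2 ⟨Finset.mem_product.2 ⟨hd2F, hd1F⟩, ht2, hf1⟩
  exact hrf (hM r hrm)

/-! ### Completeness of resolution for consequence finding -/

lemma subsume_of_vars_subset (F : Cnf) (c : Clause)
    (hv : cnfVarsF F ⊆ clVars c) (hc : ¬ ClTaut c)
    (hent : ∀ M, cnfSat M F → clauseSat M c) : ∃ d ∈ F, d ⊆ c := by
  by_contra hcon
  push_neg at hcon
  classical
  set M : ℕ → Bool := fun w => if (w, false) ∈ c then true else false with hMdef
  have hMc : ¬ clauseSat M c := by
    rintro ⟨⟨w, b⟩, hl, hsat⟩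
    rw [litSat] at hsat
    simp only [hMdef] at hsat
    cases b
    · simp [hl] at hsat
    · by_cases h : (w, false) ∈ c
      · exact hc ⟨w, hl, h⟩
      · simp [h] at hsat
  have hMF : cnfSat M F := by
    intro d hd
    obtain ⟨l, hld, hlc⟩ := Finset.not_subset.1 (hcon d hd)
    obtain ⟨w, b⟩ := l
    have hwc : w ∈ clVars c :=
      hv (Finset.le_sup (f := clVars) hd (mem_clVars.2 ⟨b, hld⟩))
    obtain ⟨b', hb'⟩ := mem_clVars.1 hwc
    have hbb : b' ≠ b := by rintro rfl; exact hlc hb'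
    refine ⟨(w, b), hld, ?_⟩
    rw [litSat]
    simp only [hMdef]
    cases b
    · have hbt : b' = true := by cases b' <;> simp_all
      subst hbt
      have hnf : (w, false) ∉ c := fun h => hc ⟨w, hb', h⟩
      simp [hnf]
    · have hbf : b' = false := by cases b' <;> simp_all
      subst hbf
      simp [hb']
  exact hMc (hent M hMF)

lemma res_subsume (n : ℕ) : ∀ (F : Cnf) (c : Clause),
    (cnfVarsF F \ clVars c).card ≤ n →
    (∀ d ∈ F, ¬ ClTaut d) → ¬ ClTaut c →
    (∀ M, cnfSat M F → clauseSat M c) →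
    ∃ c' , Deriv (↑F : Set Clause) c' ∧ c' ⊆ c := by
  induction n with
  | zero =>
    intro F c hcard hF hc hent
    have hempty : cnfVarsF F \ clVars c = ∅ := Finset.card_eq_zero.1 (Nat.le_zero.1 hcard)
    have hsub : cnfVarsF F ⊆ clVars c := Finset.sdiff_eq_empty_iff_subset.1 hempty
    obtain ⟨d, hd, hdc⟩ := subsume_of_vars_subset F c hsub hc hent
    exact ⟨d, Deriv.base hd, hdc⟩
  | succ n ih =>
    intro F c hcard hF hc hent
    rcases Finset.eq_empty_or_nonempty (cnfVarsF F \ clVars c) with hempty | ⟨v, hv⟩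
    · have hsub : cnfVarsF F ⊆ clVars c := Finset.sdiff_eq_empty_iff_subset.1 hempty
      obtain ⟨d, hd, hdc⟩ := subsume_of_vars_subset F c hsub hc hent
      exact ⟨d, Deriv.base hd, hdc⟩
    · obtain ⟨hvF, hvc⟩ := Finset.mem_sdiff.1 hv
      set G := DP F v with hGdef
      have hGnt : ∀ d ∈ G, ¬ ClTaut d := fun d hd => DP_nontaut hF hd
      have hGvars : cnfVarsF G ⊆ (cnfVarsF F).erase v :=
        Finset.sup_le fun d hd => DP_vars hF hd
      have hGcard : (cnfVarsF G \ clVars c).card ≤ n := by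
        have hsub : cnfVarsF G \ clVars c ⊆ (cnfVarsF F \ clVars c).erase v := by
          intro w hw
          obtain ⟨hw1, hw2⟩ := Finset.mem_sdiff.1 hw
          have := Finset.mem_erase.1 (hGvars hw1)
          exact Finset.mem_erase.2 ⟨this.1, Finset.mem_sdiff.2 ⟨this.2, hw2⟩⟩
        calc (cnfVarsF G \ clVars c).card ≤ ((cnfVarsF F \ clVars c).erase v).card :=
              Finset.card_le_card hsub
          _ = (cnfVarsF F \ clVars c).card - 1 := Finset.card_erase_of_mem hv
          _ ≤ n := by omega
      have hGent : ∀ M, cnfSat M G → clauseSat M c := by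
        intro M hMG
        obtain ⟨b, hb⟩ := DP_sat hMG
        refine clauseSat_agree (fun w hw => ?_) (hent _ hb)
        have hwv : w ≠ v := fun h => hvc (h ▸ hw)
        exact Function.update_of_ne hwv _ M
      obtain ⟨c', hc', hsub⟩ := ih G c hGcard hGnt hc hGent
      refine ⟨c', deriv_trans (fun d hd => DP_deriv (v := v) ?_) hc', hsub⟩
      exact_mod_cast hd

/-- Every minimal-size CNF formula equivalent to `A` is a subset of the
resolution closure of `A`. -/
theorem stmt1 (A B : Cnf)
    (hA : ∀ c ∈ A, ¬ ClTaut c) (hB : ∀ c ∈ B, ¬ ClTaut c)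
    (hequiv : cnfEquiv B A)
    (hmin : ∀ B' : Cnf, (∀ c ∈ B', ¬ ClTaut c) → cnfEquiv B' A →
      cnfSize B ≤ cnfSize B') :
    (↑B : Set Clause) ⊆ ResCn ↑A := by
  intro c hc
  have hcB : c ∈ B := hc
  have hent : ∀ M, cnfSat M A → clauseSat M c := fun M hMA => (hequiv M).2 hMA c hcB
  obtain ⟨c', hc', hsub⟩ :=
    res_subsume (cnfVarsF A \ clVars c).card A c le_rfl hA (hB c hcB) hent
  by_cases heq : c' = c
  · subst heq; exact hc'
  have hss : c' ⊂ c := lt_of_le_of_ne hsub heq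
  classical
  set B' : Cnf := insert c' (B.erase c) with hB'def
  have hB'nt : ∀ d ∈ B', ¬ ClTaut d := by
    intro d hd
    rcases Finset.mem_insert.1 hd with rfl | hd
    · exact deriv_nontaut (by exact_mod_cast hA) hc'
    · exact hB d (Finset.mem_of_mem_erase hd)
  have hB'equiv : cnfEquiv B' A := by
    intro M
    constructor
    · intro hM
      apply (hequiv M).1
      intro d hd
      by_cases hdc : d = c
      · subst hdc
        obtain ⟨l, hl, hs⟩ := hM c' (Finset.mem_insert_self _ _)
        exact ⟨l, hsub hl, hs⟩
      · exact hM d (Finset.mem_insert_of_mem (Finset.mem_erase.2 ⟨hdc, hd⟩))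
    · intro hMA d hd
      rcases Finset.mem_insert.1 hd with rfl | hd
      · exact deriv_sound hc' M (fun e he => hMA e he)
      · exact (hequiv M).2 hMA d (Finset.mem_of_mem_erase hd)
  have hsize : cnfSize B' < cnfSize B := by
    have h1 : cnfSize B' ≤ c'.card + cnfSize (B.erase c) := by
      simp only [hB'def, cnfSize]
      by_cases hcm : c' ∈ B.erase c
      · rw [Finset.insert_eq_self.2 hcm]; exact Nat.le_add_left _ _
      · rw [Finset.sum_insert hcm]
    have h2 : cnfSize B = c.card + cnfSize (B.erase c) := by
      rw [cnfSize, cnfSize, Finset.add_sum_erase _ _ hcB]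
    have h3 : c'.card < c.card := Finset.card_lt_card hss
    omega
  exact absurd (hmin B' hB'nt hB'equiv) (not_le.2 hsize)
end

section
/- A CNF formula B over variables Y expresses forgetting all variables but Y from A if and only if for every formula D over variables Y, the conjunction A ∧ D is satisfiable exactly when B ∧ D is satisfiable. -/
inductive PropForm : Type
  | tru : PropForm
  | fls : PropForm
  | var : ℕ → PropForm
  | neg : PropForm → PropForm
  | conj : PropForm → PropForm → PropForm
  | disj : PropForm → PropForm → PropForm

def PropForm.eval (M : ℕ → Bool) : PropForm → Bool
  | .tru => true
  | .fls => false
  | .var n => M n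
  | .neg φ => !(PropForm.eval M φ)
  | .conj φ ψ => PropForm.eval M φ && PropForm.eval M ψ
  | .disj φ ψ => PropForm.eval M φ || PropForm.eval M ψ

def PropForm.vars : PropForm → Set ℕ
  | .tru => ∅
  | .fls => ∅
  | .var n => {n}
  | .neg φ => PropForm.vars φ
  | .conj φ ψ => PropForm.vars φ ∪ PropForm.vars ψ
  | .disj φ ψ => PropForm.vars φ ∪ PropForm.vars ψ

def entailsForm (A : Cnf) (φ : PropForm) : Prop :=
  ∀ M, cnfSat M A → PropForm.eval M φ = true

/-- `B` expresses forgetting all variables but `Y` from `A`. -/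
def ForgetExpr (A : Cnf) (Y : Set ℕ) (B : Cnf) : Prop :=
  cnfVars B ⊆ Y ∧
    ∀ φ : PropForm, PropForm.vars φ ⊆ Y → (entailsForm A φ ↔ entailsForm B φ)

def litSetSat (M : ℕ → Bool) (S : Set Lit) : Prop := ∀ l ∈ S, litSat M l

lemma entails_neg_iff (A : Cnf) (φ : PropForm) :
    entailsForm A (.neg φ) ↔ ¬ ∃ M, cnfSat M A ∧ PropForm.eval M φ = true := by
  constructor
  · rintro h ⟨M, hM, hφ⟩
    have := h M hM
    simp [PropForm.eval, hφ] at this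
  · intro h M hM
    simp only [PropForm.eval, Bool.not_eq_true']
    by_contra hc
    exact h ⟨M, hM, by simpa using hc⟩

lemma entails_iff (A : Cnf) (φ : PropForm) :
    entailsForm A φ ↔ ¬ ∃ M, cnfSat M A ∧ PropForm.eval M (.neg φ) = true := by
  constructor
  · rintro h ⟨M, hM, hφ⟩
    simp [PropForm.eval, h M hM] at hφ
  · intro h M hM
    by_contra hc
    exact h ⟨M, hM, by simp [PropForm.eval, Bool.not_eq_true] at hc ⊢; exact hc⟩

/-- `B` (over variables `Y`) expresses forgetting all variables but `Y` from
`A` iff for every formula `D` over `Y`, `A ∧ D` is satisfiable exactly when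
`B ∧ D` is satisfiable. -/
theorem stmt2 (A B : Cnf) (Y : Set ℕ) (hB : cnfVars B ⊆ Y) :
    ForgetExpr A Y B ↔
      ∀ D : PropForm, PropForm.vars D ⊆ Y →
        ((∃ M, cnfSat M A ∧ PropForm.eval M D = true) ↔
         (∃ M, cnfSat M B ∧ PropForm.eval M D = true)) := by
  constructor
  · rintro ⟨-, h⟩ D hD
    have := h (.neg D) (by simpa [PropForm.vars] using hD)
    rw [entails_neg_iff, entails_neg_iff] at this
    exact not_iff_not.mp this
  · intro h
    refine ⟨hB, fun φ hφ => ?_⟩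
    rw [entails_iff, entails_iff]
    exact not_congr (h (.neg φ) (by simpa [PropForm.vars] using hφ))
end

section
/- A CNF formula B over variables Y expresses forgetting all variables but Y from A if and only if for every set of literals S over variables Y, the set S ∪ A is satisfiable exactly when S ∪ B is satisfiable. -/
lemma eval_congr {φ : PropForm} {M M' : ℕ → Bool}
    (h : ∀ v ∈ φ.vars, M v = M' v) : φ.eval M = φ.eval M' := by
  induction φ with
  | tru => rfl
  | fls => rfl
  | var n => exact h n rfl
  | neg ψ ih => simp only [PropForm.eval]; rw [ih h]
  | conj ψ χ ih1 ih2 =>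
      simp only [PropForm.eval]
      rw [ih1 (fun v hv => h v (Or.inl hv)), ih2 (fun v hv => h v (Or.inr hv))]
  | disj ψ χ ih1 ih2 =>
      simp only [PropForm.eval]
      rw [ih1 (fun v hv => h v (Or.inl hv)), ih2 (fun v hv => h v (Or.inr hv))]

def Fvars (F : Cnf) : Finset ℕ := F.sup (fun c => c.image Prod.fst)

lemma mem_Fvars {v : ℕ} {F : Cnf} : v ∈ Fvars F ↔ v ∈ cnfVars F := by
  simp only [Fvars, Finset.mem_sup, Finset.mem_image, cnfVars, Set.mem_setOf_eq]
  constructor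
  · rintro ⟨c, hc, ⟨a, b⟩, hl, rfl⟩; exact ⟨c, hc, b, hl⟩
  · rintro ⟨c, hc, b, hl⟩; exact ⟨c, hc, (v, b), hl, rfl⟩

lemma cnfSat_congr {F : Cnf} {M M' : ℕ → Bool}
    (h : ∀ v ∈ cnfVars F, M v = M' v) : cnfSat M F ↔ cnfSat M' F := by
  have key : ∀ c ∈ F, ∀ l ∈ c, M l.1 = M' l.1 := by
    intro c hc l hl
    exact h l.1 ⟨c, hc, l.2, by rwa [Prod.mk.eta]⟩
  constructor <;> intro hs c hc <;> obtain ⟨l, hl, hsat⟩ := hs c hc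
  · exact ⟨l, hl, by rw [litSat, ← key c hc l hl]; exact hsat⟩
  · exact ⟨l, hl, by rw [litSat, key c hc l hl]; exact hsat⟩

def negLitForm (l : Lit) : PropForm := if l.2 then .neg (.var l.1) else .var l.1

lemma eval_negLitForm {l : Lit} {M : ℕ → Bool} :
    (negLitForm l).eval M = true ↔ ¬ (M l.1 = l.2) := by
  obtain ⟨v, b⟩ := l
  cases b <;> simp [negLitForm, PropForm.eval]

lemma vars_negLitForm {l : Lit} : (negLitForm l).vars = {l.1} := by
  obtain ⟨v, b⟩ := l; cases b <;> rfl

def disjList : List Lit → PropForm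
  | [] => .fls
  | l :: ls => .disj (negLitForm l) (disjList ls)

lemma eval_disjList {L : List Lit} {M : ℕ → Bool} :
    (disjList L).eval M = true ↔ ∃ l ∈ L, ¬ (M l.1 = l.2) := by
  induction L with
  | nil => simp [disjList, PropForm.eval]
  | cons a as ih => simp [disjList, PropForm.eval, ih, eval_negLitForm]

lemma vars_disjList {L : List Lit} {v : ℕ} (hv : v ∈ (disjList L).vars) :
    ∃ l ∈ L, l.1 = v := by
  induction L with
  | nil => exact absurd hv (by simp [disjList, PropForm.vars])
  | cons a as ih =>
      rcases hv with h | h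
      · rw [vars_negLitForm] at h; exact ⟨a, by simp, h.symm⟩
      · obtain ⟨l, hl, rfl⟩ := ih h; exact ⟨l, by simp [hl], rfl⟩

lemma extend_sat (S : Set Lit) (F : Cnf)
    (hcons : ∀ v b b', (v, b) ∈ S → (v, b') ∈ S → b = b')
    (M : ℕ → Bool)
    (hT : ∀ l ∈ S, l.1 ∈ Fvars F → litSat M l)
    (hF : cnfSat M F) :
    ∃ M', litSetSat M' S ∧ cnfSat M' F := by
  classical
  refine ⟨fun v => if h : ∃ b, (v, b) ∈ S then h.choose else M v, ?_, ?_⟩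
  · intro l hl
    have h : ∃ b, (l.1, b) ∈ S := ⟨l.2, by rwa [Prod.mk.eta]⟩
    show (if h' : ∃ b, (l.1, b) ∈ S then h'.choose else M l.1) = l.2
    rw [dif_pos h]
    exact hcons l.1 h.choose l.2 h.choose_spec (by rwa [Prod.mk.eta])
  · refine (cnfSat_congr ?_).mp hF
    intro v hv
    by_cases h : ∃ b, (v, b) ∈ S
    · simp only [dif_pos h]
      exact hT (v, h.choose) h.choose_spec (mem_Fvars.mpr hv)
    · simp only [dif_neg h]

/-- `B` (over variables `Y`) expresses forgetting all variables but `Y` from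
`A` iff for every set of literals `S` over `Y`, `S ∪ A` is satisfiable exactly
when `S ∪ B` is satisfiable. -/
theorem stmt3 (A B : Cnf) (Y : Set ℕ) (hB : cnfVars B ⊆ Y) :
    ForgetExpr A Y B ↔
      ∀ S : Set Lit, (∀ l ∈ S, l.1 ∈ Y) →
        ((∃ M, litSetSat M S ∧ cnfSat M A) ↔
         (∃ M, litSetSat M S ∧ cnfSat M B)) := by
  classical
  constructor
  · rintro ⟨-, hφ⟩ S hSY
    by_cases hcons : ∀ v b b', (v, b) ∈ S → (v, b') ∈ S → b = b'
    · -- S consistent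
      set T : Finset Lit :=
        ((Fvars A ∪ Fvars B) ×ˢ (Finset.univ : Finset Bool)).filter (fun l => l ∈ S) with hTdef
      have hmemT : ∀ l : Lit, l ∈ T ↔ l ∈ S ∧ (l.1 ∈ Fvars A ∨ l.1 ∈ Fvars B) := by
        intro l
        simp [hTdef, Finset.mem_filter, Finset.mem_product, Finset.mem_union, and_comm]
      -- the bridging formula
      set φ : PropForm := disjList T.toList with hφdef
      have hφY : φ.vars ⊆ Y := by
        intro v hv
        obtain ⟨l, hl, rfl⟩ := vars_disjList hv
        exact hSY l (((hmemT l).mp (Finset.mem_toList.mp hl)).1)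
      have key : ∀ F : Cnf, (¬ entailsForm F φ) ↔
          ∃ M, (∀ l ∈ T, litSat M l) ∧ cnfSat M F := by
        intro F
        unfold entailsForm
        push_neg
        constructor
        · rintro ⟨M, hMF, hev⟩
          refine ⟨M, ?_, hMF⟩
          intro l hl
          by_contra hns
          exact hev ((eval_disjList (L := T.toList)).mpr ⟨l, Finset.mem_toList.mpr hl, hns⟩)
        · rintro ⟨M, hMT, hMF⟩
          refine ⟨M, hMF, ?_⟩
          intro hev
          obtain ⟨l, hl, hns⟩ := (eval_disjList (L := T.toList)).mp hev
          exact hns (hMT l (Finset.mem_toList.mp hl))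
      have hTiff : (∃ M, (∀ l ∈ T, litSat M l) ∧ cnfSat M A) ↔
          (∃ M, (∀ l ∈ T, litSat M l) ∧ cnfSat M B) := by
        rw [← key A, ← key B, not_iff_not]
        exact hφ φ hφY
      have hSA : ∀ F : Cnf, (Fvars F ⊆ Fvars A ∪ Fvars B) →
          ((∃ M, litSetSat M S ∧ cnfSat M F) ↔ (∃ M, (∀ l ∈ T, litSat M l) ∧ cnfSat M F)) := by
        intro F hFsub
        constructor
        · rintro ⟨M, hMS, hMF⟩
          exact ⟨M, fun l hl => hMS l (((hmemT l).mp hl).1), hMF⟩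
        · rintro ⟨M, hMT, hMF⟩
          refine extend_sat S F hcons M ?_ hMF
          intro l hlS hlF
          exact hMT l ((hmemT l).mpr ⟨hlS, Finset.mem_union.mp (hFsub hlF)⟩)
      rw [hSA A (Finset.subset_union_left), hSA B (Finset.subset_union_right)]
      exact hTiff
    · -- S inconsistent: both sides are false
      push_neg at hcons
      obtain ⟨v, b, b', hb, hb', hne⟩ := hcons
      constructor <;> rintro ⟨M, hMS, -⟩ <;>
        exact absurd ((hMS (v, b) hb).symm.trans (hMS (v, b') hb')) hne
  · intro h
    refine ⟨hB, fun φ hφY => ?_⟩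
    constructor
    · intro hA M hMB
      obtain ⟨M', hM'S, hM'A⟩ :=
        (h {l | l.1 ∈ Y ∧ M l.1 = l.2} (fun l hl => hl.1)).mpr
          ⟨M, fun l hl => hl.2, hMB⟩
      have hag : φ.eval M' = φ.eval M :=
        eval_congr (fun v hv => (hM'S (v, M v) ⟨hφY hv, rfl⟩ : M' v = M v))
      rw [← hag]
      exact hA M' hM'A
    · intro hBφ M hMA
      obtain ⟨M', hM'S, hM'B⟩ :=
        (h {l | l.1 ∈ Y ∧ M l.1 = l.2} (fun l hl => hl.1)).mp
          ⟨M, fun l hl => hl.2, hMA⟩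
      have hag : φ.eval M' = φ.eval M :=
        eval_congr (fun v hv => (hM'S (v, M v) ⟨hφY hv, rfl⟩ : M' v = M v))
      rw [← hag]
      exact hBφ M' hM'B
end

section
/- If S is a set of literals such that S ∪ A is satisfiable but (S \ {l}) ∪ {¬l} ∪ A is unsatisfiable, then the CNF formula A contains a clause containing the literal l. -/
/-- If `S ∪ A` is satisfiable but `(S \ {l}) ∪ {¬l} ∪ A` is not, then `A`
contains a clause containing the literal `l`. -/
theorem stmt8 (A : Cnf) (S : Set Lit) (l : Lit) (hl : l ∈ S)
    (hsat : ∃ M, litSetSat M S ∧ cnfSat M A)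
    (hunsat : ¬ ∃ M, litSetSat M ((S \ {l}) ∪ {Lit.negate l}) ∧ cnfSat M A) :
    ∃ c ∈ A, l ∈ c := by
  obtain ⟨M, hS, hA⟩ := hsat
  set M' : ℕ → Bool := fun v => if v = l.1 then !l.2 else M v with hM'
  have hml : M l.1 = l.2 := hS l hl
  have hflip : M' l.1 = !l.2 := by simp [hM']
  have hother : ∀ v, v ≠ l.1 → M' v = M v := by intro v hv; simp [hM', hv]
  have hS' : litSetSat M' ((S \ {l}) ∪ {Lit.negate l}) := by
    rintro m (⟨hmS, hml'⟩ | hm)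
    · by_cases hv : m.1 = l.1
      · have : M m.1 = m.2 := hS m hmS
        have : m = l := by
          have h2 := hS m hmS
          rw [litSat, hv, hml] at h2
          exact Prod.ext hv h2.symm
        exact absurd (Set.mem_singleton_iff.mpr this) hml'
      · rw [litSat, hother m.1 hv]; exact hS m hmS
    · simp only [Set.mem_singleton_iff] at hm
      subst hm
      simpa [Lit.negate, litSat] using hflip
  have : ¬ cnfSat M' A := fun h => hunsat ⟨M', hS', h⟩
  rw [cnfSat] at this
  push_neg at this
  obtain ⟨c, hc, hcfail⟩ := this
  obtain ⟨m, hmc, hmsat⟩ := hA c hc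
  refine ⟨c, hc, ?_⟩
  by_cases hv : m.1 = l.1
  · have hm2 : m.2 = l.2 := by rw [litSat, hv, hml] at hmsat; exact hmsat.symm
    have : m = l := Prod.ext hv hm2
    rwa [this] at hmc
  · exact absurd ⟨m, hmc, by rw [litSat, hother m.1 hv]; exact hmsat⟩ hcfail
end

section
/- If a clause c of a CNF formula F is superirredundant, then c is contained in every minimal-size CNF formula equivalent to F. -/
-- ===== helpers =====

def varsC (c : Clause) : Finset ℕ := c.image Prod.fst

def varsF (F : Cnf) : Finset ℕ := F.biUnion varsC

lemma mem_varsC {v : ℕ} {b : Bool} {c : Clause} (h : (v, b) ∈ c) : v ∈ varsC c :=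
  Finset.mem_image.2 ⟨(v, b), h, rfl⟩

lemma clauseSat_mono {M : ℕ → Bool} {c d : Clause} (h : c ⊆ d) :
    clauseSat M c → clauseSat M d := fun ⟨l, hl, hs⟩ => ⟨l, h hl, hs⟩

lemma falsifiable {b : Clause} (hb : ¬ ClTaut b) : ∃ M, ¬ clauseSat M b := by
  refine ⟨fun w => if (w, true) ∈ b then false else true, ?_⟩
  rintro ⟨⟨w, bb⟩, hl, hs⟩
  simp only [litSat] at hs
  cases bb
  · have hw : (w, true) ∉ b := fun h => hb ⟨w, h, hl⟩
    simp [hw] at hs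
  · simp [hl] at hs

lemma derivNoVar {S : Set Clause} {v : ℕ} (hS : ∀ c ∈ S, ∀ b : Bool, (v, b) ∉ c)
    {d : Clause} (h : Deriv S d) : ∀ b : Bool, (v, b) ∉ d := by
  induction h with
  | base h => exact hS _ h
  | step _ _ hres _ ih1 ih2 =>
    intro b hbm
    rw [hres.2.2] at hbm
    rcases Finset.mem_union.1 hbm with h | h
    · exact ih1 b (Finset.mem_of_mem_erase h)
    · exact ih2 b (Finset.mem_of_mem_erase h)

def restrict (v : ℕ) (t : Bool) (F : Cnf) : Cnf :=
  (F.filter (fun c => (v, t) ∉ c)).image (fun c => c.erase (v, !t))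

lemma restrict_noVar {v : ℕ} {t : Bool} {F : Cnf} :
    ∀ c ∈ restrict v t F, ∀ b : Bool, (v, b) ∉ c := by
  intro c hc b hb
  obtain ⟨c0, hc0, rfl⟩ := Finset.mem_image.1 hc
  have h1 := (Finset.mem_filter.1 hc0).2
  have hb' := Finset.mem_of_mem_erase hb
  have hne : (v, b) ≠ (v, !t) := Finset.ne_of_mem_erase hb
  have hbt : b = t := by cases b <;> cases t <;> simp_all
  exact h1 (hbt ▸ hb')

lemma varsF_restrict {v : ℕ} {t : Bool} {F : Cnf} :
    varsF (restrict v t F) ⊆ (varsF F).erase v := by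
  intro w hw
  obtain ⟨c, hc, hwc⟩ := Finset.mem_biUnion.1 hw
  obtain ⟨⟨w', b⟩, hl, hlw⟩ := Finset.mem_image.1 hwc
  cases hlw
  refine Finset.mem_erase.2 ⟨?_, ?_⟩
  · rintro rfl
    exact restrict_noVar c hc b hl
  · obtain ⟨c0, hc0, rfl⟩ := Finset.mem_image.1 hc
    exact Finset.mem_biUnion.2 ⟨c0, (Finset.mem_filter.1 hc0).1,
      mem_varsC (Finset.mem_of_mem_erase hl)⟩

lemma restrict_nontaut {v : ℕ} {t : Bool} {F : Cnf} (hF : ∀ d ∈ F, ¬ ClTaut d) :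
    ∀ d ∈ restrict v t F, ¬ ClTaut d := by
  rintro d hd ⟨w, h1, h2⟩
  obtain ⟨c0, hc0, rfl⟩ := Finset.mem_image.1 hd
  exact hF c0 (Finset.mem_filter.1 hc0).1
    ⟨w, Finset.mem_of_mem_erase h1, Finset.mem_of_mem_erase h2⟩

lemma sat_restrict {M : ℕ → Bool} {v : ℕ} {t : Bool} {F : Cnf}
    (h : cnfSat M (restrict v t F)) : cnfSat (Function.update M v t) F := by
  intro c hcF
  by_cases hvt : (v, t) ∈ c
  · exact ⟨(v, t), hvt, by simp [litSat]⟩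
  · have hmem : c.erase (v, !t) ∈ restrict v t F :=
      Finset.mem_image.2 ⟨c, Finset.mem_filter.2 ⟨hcF, hvt⟩, rfl⟩
    obtain ⟨⟨w, bb⟩, hl, hsat⟩ := h _ hmem
    have hwc : (w, bb) ∈ c := Finset.mem_of_mem_erase hl
    have hne : (w, bb) ≠ (v, !t) := Finset.ne_of_mem_erase hl
    refine ⟨(w, bb), hwc, ?_⟩
    have hwv : w ≠ v := by
      rintro rfl
      have hbt : bb = t := by cases bb <;> cases t <;> simp_all
      exact hvt (hbt ▸ hwc)
    simpa [litSat, Function.update_of_ne hwv] using hsat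

lemma clauseSat_update {M : ℕ → Bool} {v : ℕ} {t : Bool} {b : Clause}
    (hb : ∀ bb : Bool, (v, bb) ∉ b)
    (h : clauseSat (Function.update M v t) b) : clauseSat M b := by
  obtain ⟨⟨w, bb⟩, hl, hs⟩ := h
  have hwv : w ≠ v := fun h' => hb bb (h' ▸ hl)
  exact ⟨(w, bb), hl, by simpa [litSat, Function.update_of_ne hwv] using hs⟩

lemma lift {v : ℕ} {t : Bool} {F : Cnf} {d : Clause}
    (hd : Deriv ↑(restrict v t F) d) :
    ∃ e, Deriv (↑F : Set Clause) e ∧ e ⊆ insert (v, !t) d ∧ (v, t) ∉ e := by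
  induction hd with
  | @base c hc =>
    have hc' : c ∈ restrict v t F := hc
    obtain ⟨c0, hc0, rfl⟩ := Finset.mem_image.1 hc'
    have hc0F := (Finset.mem_filter.1 hc0).1
    have hvt := (Finset.mem_filter.1 hc0).2
    refine ⟨c0, Deriv.base (Finset.mem_coe.2 hc0F), ?_, hvt⟩
    intro x hx
    by_cases hx' : x = (v, !t)
    · simp [hx']
    · exact Finset.mem_insert_of_mem (Finset.mem_erase.2 ⟨hx', hx⟩)
  | @step c1 c2 r v' h1 h2 hres hnt ih1 ih2 =>
    obtain ⟨e1, hd1, hs1, hv1⟩ := ih1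
    obtain ⟨e2, hd2, hs2, hv2⟩ := ih2
    have hnc1 : ∀ b : Bool, (v, b) ∉ c1 :=
      derivNoVar (fun c hcm => restrict_noVar c (Finset.mem_coe.1 hcm)) h1
    by_cases hA : (v', true) ∈ e1
    · by_cases hB : (v', false) ∈ e2
      · have hsub : e1.erase (v', true) ∪ e2.erase (v', false) ⊆ insert (v, !t) r := by
          rw [hres.2.2]
          intro x hx
          rcases Finset.mem_union.1 hx with hx | hx
          · have hx1 := Finset.mem_of_mem_erase hx
            have hxne := Finset.ne_of_mem_erase hx
            rcases Finset.mem_insert.1 (hs1 hx1) with h | h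
            · exact Finset.mem_insert.2 (Or.inl h)
            · exact Finset.mem_insert_of_mem
                (Finset.mem_union_left _ (Finset.mem_erase.2 ⟨hxne, h⟩))
          · have hx1 := Finset.mem_of_mem_erase hx
            have hxne := Finset.ne_of_mem_erase hx
            rcases Finset.mem_insert.1 (hs2 hx1) with h | h
            · exact Finset.mem_insert.2 (Or.inl h)
            · exact Finset.mem_insert_of_mem
                (Finset.mem_union_right _ (Finset.mem_erase.2 ⟨hxne, h⟩))
        have hvt' : (v, t) ∉ e1.erase (v', true) ∪ e2.erase (v', false) := by
          intro h
          rcases Finset.mem_union.1 h with h | h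
          · exact hv1 (Finset.mem_of_mem_erase h)
          · exact hv2 (Finset.mem_of_mem_erase h)
        have hent : ¬ ClTaut (e1.erase (v', true) ∪ e2.erase (v', false)) := by
          rintro ⟨w, hw1, hw2⟩
          by_cases hwv : w = v
          · subst hwv
            cases t
            · exact hvt' hw2
            · exact hvt' hw1
          · apply hnt
            refine ⟨w, ?_, ?_⟩
            · rcases Finset.mem_insert.1 (hsub hw1) with h | h
              · exact absurd (congrArg Prod.fst h) hwv
              · exact h
            · rcases Finset.mem_insert.1 (hsub hw2) with h | h
              · exact absurd (congrArg Prod.fst h) hwv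
              · exact h
        exact ⟨_, Deriv.step hd1 hd2 ⟨hA, hB, rfl⟩ hent, hsub, hvt'⟩
      · refine ⟨e2, hd2, ?_, hv2⟩
        intro x hx
        rcases Finset.mem_insert.1 (hs2 hx) with h | h
        · exact h ▸ Finset.mem_insert_self _ _
        · refine Finset.mem_insert_of_mem ?_
          rw [hres.2.2]
          exact Finset.mem_union_right _
            (Finset.mem_erase.2 ⟨fun he => hB (he ▸ hx), h⟩)
    · refine ⟨e1, hd1, ?_, hv1⟩
      intro x hx
      rcases Finset.mem_insert.1 (hs1 hx) with h | h
      · exact h ▸ Finset.mem_insert_self _ _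
      · refine Finset.mem_insert_of_mem ?_
        rw [hres.2.2]
        exact Finset.mem_union_left _
          (Finset.mem_erase.2 ⟨fun he => hA (he ▸ hx), h⟩)

lemma completeNoVars {F : Cnf} (h : varsF F = ∅) {b : Clause} (hb : ¬ ClTaut b)
    (hent : setEntails ↑F b) : ∃ d, Deriv (↑F : Set Clause) d ∧ d ⊆ b := by
  by_cases h0 : (∅ : Clause) ∈ F
  · exact ⟨∅, Deriv.base (Finset.mem_coe.2 h0), Finset.empty_subset b⟩
  · exfalso
    have hFe : F = ∅ := by
      by_contra hne
      obtain ⟨cc, hcc⟩ := Finset.nonempty_iff_ne_empty.2 hne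
      obtain ⟨⟨w, bb⟩, hl⟩ := Finset.nonempty_iff_ne_empty.2
        (fun he => h0 (he ▸ hcc))
      have hw : w ∈ varsF F := Finset.mem_biUnion.2 ⟨cc, hcc, mem_varsC hl⟩
      simp [h] at hw
    obtain ⟨M, hM⟩ := falsifiable hb
    refine hM (hent M ?_)
    intro cc hcc
    simp [hFe] at hcc

lemma completenessAux : ∀ n (F : Cnf), (varsF F).card ≤ n → (∀ d ∈ F, ¬ ClTaut d) →
    ∀ b : Clause, ¬ ClTaut b → setEntails ↑F b →
      ∃ d, Deriv (↑F : Set Clause) d ∧ d ⊆ b := by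
  intro n
  induction n with
  | zero =>
    intro F hcard hF b hb hent
    exact completeNoVars (Finset.card_eq_zero.1 (Nat.le_zero.1 hcard)) hb hent
  | succ n ih =>
    intro F hcard hF b hb hent
    by_cases hv : ∃ v, v ∈ varsF F
    case neg =>
      push_neg at hv
      exact completeNoVars (Finset.eq_empty_iff_forall_notMem.2 hv) hb hent
    obtain ⟨v, hvF⟩ := hv
    have hcard' : ∀ t : Bool, (varsF (restrict v t F)).card ≤ n := by
      intro t
      have h1 := Finset.card_le_card (varsF_restrict (v := v) (t := t) (F := F))
      rw [Finset.card_erase_of_mem hvF] at h1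
      have h2 : 1 ≤ (varsF F).card := Finset.card_pos.2 ⟨v, hvF⟩
      omega
    have hFnt' : ∀ t : Bool, ∀ d ∈ restrict v t F, ¬ ClTaut d :=
      fun t => restrict_nontaut hF
    have hsatF : ∀ (t : Bool) (M : ℕ → Bool), setSat M ↑(restrict v t F) →
        setSat (Function.update M v t) ↑F := by
      intro t M hM cc hcc
      exact sat_restrict (fun c hcm => hM c (Finset.mem_coe.2 hcm)) cc
        (Finset.mem_coe.1 hcc)
    by_cases hvb : ∃ bb, (v, bb) ∈ b
    · obtain ⟨bb, hbb⟩ := hvb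
      have hb' : ¬ ClTaut (b.erase (v, bb)) := fun ⟨w, h1, h2⟩ =>
        hb ⟨w, Finset.mem_of_mem_erase h1, Finset.mem_of_mem_erase h2⟩
      have hent' : setEntails ↑(restrict v (!bb) F) (b.erase (v, bb)) := by
        intro M hM
        obtain ⟨⟨w, cb⟩, hlb, hls⟩ := hent _ (hsatF (!bb) M hM)
        have hwv : w ≠ v := by
          rintro rfl
          by_cases hcb : cb = bb
          · subst hcb
            simp [litSat, Function.update_self] at hls
          · have hcb' : cb = !bb := by cases cb <;> cases bb <;> simp_all
            subst hcb'
            cases bb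
            · exact hb ⟨w, hlb, hbb⟩
            · exact hb ⟨w, hbb, hlb⟩
        refine ⟨(w, cb), Finset.mem_erase.2 ⟨fun h => hwv (congrArg Prod.fst h), hlb⟩, ?_⟩
        simpa [litSat, Function.update_of_ne hwv] using hls
      obtain ⟨d, hdD, hdb'⟩ := ih (restrict v (!bb) F) (hcard' _) (hFnt' _) _ hb' hent'
      obtain ⟨e, heD, hes, -⟩ := lift hdD
      refine ⟨e, heD, ?_⟩
      intro x hx
      rcases Finset.mem_insert.1 (hes hx) with h | h
      · rw [h]; simpa using hbb
      · exact Finset.mem_of_mem_erase (hdb' h)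
    · push_neg at hvb
      have hentT : ∀ t : Bool, setEntails ↑(restrict v t F) b := by
        intro t M hM
        exact clauseSat_update (fun bb => hvb bb) (hent _ (hsatF t M hM))
      obtain ⟨dT, hdT, hsT⟩ := ih (restrict v true F) (hcard' _) (hFnt' _) b hb (hentT true)
      obtain ⟨dF, hdF, hsF⟩ := ih (restrict v false F) (hcard' _) (hFnt' _) b hb (hentT false)
      obtain ⟨eT, heT, hesT, hvT⟩ := lift hdT
      obtain ⟨eF, heF, hesF, hvF2⟩ := lift hdF
      by_cases hA : (v, false) ∈ eT
      · by_cases hB : (v, true) ∈ eF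
        · have hsub : eF.erase (v, true) ∪ eT.erase (v, false) ⊆ b := by
            intro x hx
            rcases Finset.mem_union.1 hx with hx | hx
            · rcases Finset.mem_insert.1 (hesF (Finset.mem_of_mem_erase hx)) with h | h
              · exact absurd h (Finset.ne_of_mem_erase hx)
              · exact hsF h
            · rcases Finset.mem_insert.1 (hesT (Finset.mem_of_mem_erase hx)) with h | h
              · exact absurd h (Finset.ne_of_mem_erase hx)
              · exact hsT h
          refine ⟨_, Deriv.step heF heT ⟨hB, hA, rfl⟩ ?_, hsub⟩
          rintro ⟨w, h1, h2⟩
          exact hb ⟨w, hsub h1, hsub h2⟩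
        · refine ⟨eF, heF, fun x hx => ?_⟩
          rcases Finset.mem_insert.1 (hesF hx) with h | h
          · exact absurd (h ▸ hx) hB
          · exact hsF h
      · refine ⟨eT, heT, fun x hx => ?_⟩
        rcases Finset.mem_insert.1 (hesT hx) with h | h
        · exact absurd (h ▸ hx) hA
        · exact hsT h

lemma completeness (F : Cnf) (hF : ∀ d ∈ F, ¬ ClTaut d) {b : Clause}
    (hb : ¬ ClTaut b) (hent : setEntails ↑F b) :
    ∃ d, Deriv (↑F : Set Clause) d ∧ d ⊆ b :=
  completenessAux _ F le_rfl hF b hb hent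

/-- A superirredundant clause of `F` is contained in every minimal-size CNF
formula equivalent to `F`. -/
theorem stmt10 (F : Cnf) (c : Clause) (hc : c ∈ F)
    (hNT : ∀ d ∈ F, ¬ ClTaut d)
    (hirr : ¬ superRedundant F c)
    (B : Cnf) (hBNT : ∀ d ∈ B, ¬ ClTaut d)
    (hequiv : cnfEquiv B F)
    (hmin : ∀ B' : Cnf, (∀ d ∈ B', ¬ ClTaut d) → cnfEquiv B' F →
      cnfSize B ≤ cnfSize B') :
    c ∈ B := by
  by_contra hcB
  unfold superRedundant setEntails at hirr
  push_neg at hirr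
  obtain ⟨M, hM, hMc⟩ := hirr
  by_cases hall : cnfSat M B
  · exact hMc ((hequiv M).1 hall c hc)
  · unfold cnfSat at hall
    push_neg at hall
    obtain ⟨b, hbB, hbns⟩ := hall
    have hent : setEntails ↑F b := by
      intro M' hM'
      have hMF : cnfSat M' F := fun cc hcc => hM' cc (Finset.mem_coe.2 hcc)
      exact (hequiv M').2 hMF b hbB
    obtain ⟨d, hdD, hdb⟩ := completeness F hNT (hBNT b hbB) hent
    have hdc : d = c := by
      by_contra hne
      exact hbns (clauseSat_mono hdb (hM d ⟨hdD, by simpa using hne⟩))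
    subst hdc
    have hcbne : d ≠ b := fun h => hcB (h ▸ hbB)
    have hcnot : d ∉ B.erase b := fun h => hcB (Finset.mem_of_mem_erase h)
    have hB'NT : ∀ e ∈ insert d (B.erase b), ¬ ClTaut e := by
      intro e he
      rcases Finset.mem_insert.1 he with rfl | he
      · exact hNT _ hc
      · exact hBNT e (Finset.mem_of_mem_erase he)
    have hB'eq : cnfEquiv (insert d (B.erase b)) F := by
      intro M'
      constructor
      · intro h
        refine (hequiv M').1 ?_
        intro e heB
        by_cases heb : e = b
        · subst heb
          exact clauseSat_mono hdb (h d (Finset.mem_insert_self _ _))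
        · exact h e (Finset.mem_insert_of_mem (Finset.mem_erase.2 ⟨heb, heB⟩))
      · intro h
        have hBsat := (hequiv M').2 h
        intro e heB'
        rcases Finset.mem_insert.1 heB' with rfl | he
        · exact h _ hc
        · exact hBsat e (Finset.mem_of_mem_erase he)
    have hle := hmin _ hB'NT hB'eq
    have hclt : d.card < b.card :=
      Finset.card_lt_card (Finset.ssubset_iff_subset_ne.2 ⟨hdb, hcbne⟩)
    have h1 : cnfSize (insert d (B.erase b)) = d.card + cnfSize (B.erase b) := by
      simp only [cnfSize]
      exact Finset.sum_insert hcnot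
    have h2 : b.card + cnfSize (B.erase b) = cnfSize B := by
      simp only [cnfSize]
      exact Finset.add_sum_erase _ _ hbB
    omega
end

section
/- There exist two equivalent CNF formulae containing a common clause that is superredundant in one but superirredundant in the other; e.g., the clause {a} in F = {a, ¬a∨b, a∨¬b} versus F' = {a, b}. -/
-- auxiliary definitions
def cA : Clause := {(0, true)}
def cB : Clause := {(1, true)}
def cNAB : Clause := {(0, false), (1, true)}
def cANB : Clause := {(0, true), (1, false)}

def Fbig : Cnf := {cA, cNAB, cANB}
def Fsmall : Cnf := {cA, cB}

lemma derivSmall : ∀ d, Deriv ↑Fsmall d → d = cA ∨ d = cB := by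
  intro d h
  induction h with
  | base hm =>
    simp [Fsmall] at hm
    tauto
  | step h1 h2 hres htaut ih1 ih2 =>
    obtain ⟨_, hv2, _⟩ := hres
    exfalso
    rcases ih2 with h | h <;> subst h <;> simp [cA, cB] at hv2

theorem stmt12' :
    ∃ (F F' : Cnf) (c : Clause),
      (∀ d ∈ F, ¬ ClTaut d) ∧ (∀ d ∈ F', ¬ ClTaut d) ∧
      cnfEquiv F F' ∧ c ∈ F ∧ c ∈ F' ∧
      superRedundant F c ∧ ¬ superRedundant F' c := by
  refine ⟨Fbig, Fsmall, cA, ?_, ?_, ?_, ?_, ?_, ?_, ?_⟩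
  · intro d hd
    rintro ⟨v, h1, h2⟩
    simp only [Fbig, Finset.mem_insert, Finset.mem_singleton] at hd
    rcases hd with h|h|h <;> subst h <;> simp [cA, cNAB, cANB] at h1 h2 <;> simp_all
  · intro d hd
    rintro ⟨v, h1, h2⟩
    simp only [Fsmall, Finset.mem_insert, Finset.mem_singleton] at hd
    rcases hd with h|h <;> subst h <;> simp [cA, cB] at h1 h2
  · intro M
    constructor
    · intro h
      intro d hd
      simp [Fsmall] at hd
      have h1 := h cA (by simp [Fbig])
      have h2 := h cNAB (by simp [Fbig])
      simp [clauseSat, litSat, cA, cNAB] at h1 h2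
      rcases hd with h | h <;> subst h <;>
        simp [clauseSat, litSat, cA, cB] <;> simp_all
    · intro h
      intro d hd
      have h1 := h cA (by simp [Fsmall])
      have h2 := h cB (by simp [Fsmall])
      simp [clauseSat, litSat, cA, cB] at h1 h2
      simp [Fbig] at hd
      rcases hd with h | h | h <;> subst h <;>
        simp [clauseSat, litSat, cA, cNAB, cANB] <;> simp_all
  · simp [Fbig]
  · simp [Fsmall]
  · -- superredundant in Fbig
    intro M hM
    have hb : Deriv ↑Fbig cB := by
      apply Deriv.step (Deriv.base (show cA ∈ ↑Fbig by simp [Fbig]))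
        (Deriv.base (show cNAB ∈ ↑Fbig by simp [Fbig]))
        (v := 0)
      · refine ⟨by simp [cA], by simp [cNAB], ?_⟩
        decide
      · rintro ⟨v, h1, h2⟩
        simp [cB] at h1 h2
    have hbS : cB ∈ ResCn ↑Fbig \ {cA} := by
      refine ⟨hb, ?_⟩
      simp only [Set.mem_singleton_iff, cA, cB]
      decide
    have haS : cANB ∈ ResCn ↑Fbig \ {cA} := by
      refine ⟨Deriv.base (by simp [Fbig]), ?_⟩
      simp only [Set.mem_singleton_iff, cA, cANB]
      decide
    have h1 := hM cB hbS
    have h2 := hM cANB haS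
    simp [clauseSat, litSat, cB, cANB] at h1 h2
    simp [clauseSat, litSat, cA]
    simp_all
  · -- not superredundant in Fsmall
    intro h
    have := h (fun n => n == 1) ?_
    · simp [clauseSat, litSat, cA] at this
    · intro d hd
      obtain ⟨hdr, hdne⟩ := hd
      rcases derivSmall d hdr with h | h
      · exact absurd h (by simpa using hdne)
      · subst h
        simp [clauseSat, litSat, cB]

/-- There exist two equivalent CNF formulae with a common clause that is
superredundant in one and superirredundant in the other. -/
theorem stmt12 :
    ∃ (F F' : Cnf) (c : Clause),
      (∀ d ∈ F, ¬ ClTaut d) ∧ (∀ d ∈ F', ¬ ClTaut d) ∧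
      cnfEquiv F F' ∧ c ∈ F ∧ c ∈ F' ∧
      superRedundant F c ∧ ¬ superRedundant F' c := by
  exact stmt12'
end

section
/- A clause c of a CNF formula F is superredundant if and only if there exists a formula G with F ⊢ G (every clause of G derivable from F by resolution), G ⊨ c, and c ∉ G. -/
/-- A clause `c` of `F` is superredundant iff some set of clauses `G` is
derivable from `F` by resolution, entails `c`, and does not contain `c`. -/
theorem stmt13 (F : Cnf) (c : Clause) (hc : c ∈ F)
    (hNT : ∀ d ∈ F, ¬ ClTaut d) :
    superRedundant F c ↔
      ∃ G : Set Clause, (∀ d ∈ G, Deriv ↑F d) ∧ setEntails G c ∧ c ∉ G := by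
  constructor
  · intro h
    exact ⟨ResCn ↑F \ {c}, fun d hd => hd.1, h, fun h' => h'.2 rfl⟩
  · rintro ⟨G, hG, hE, hcG⟩ M hM
    exact hE M (fun d hd => hM d ⟨hG d hd, fun h' => hcG (h' ▸ hd)⟩)
end

section
/- A clause c of a CNF formula F is superredundant if and only if either F derives by resolution a proper subclause of c, or F derives by resolution two clauses c1 ∨ a and c2 ∨ ¬a for some variable a not occurring in c and clauses c1, c2 with c = c1 ∨ c2. -/
open scoped Classical

def Lift (F : Cnf) (c : Clause) (r : Clause) : Prop :=
  (∀ l ∈ r, l.1 ∉ c.image Prod.fst) ∧ ∃ c', c' ⊆ c ∧ Deriv ↑F (c' ∪ r)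

lemma lift_resolvent (F : Cnf) (c : Clause) (hcNT : ¬ ClTaut c) {r1 r2 r : Clause} {a : ℕ}
    (h1 : Lift F c r1) (h2 : Lift F c r2) (hr : isResolvent r1 r2 r a)
    (hrt : ¬ ClTaut r) : Lift F c r := by
  obtain ⟨hv1, c1', hc1, hd1⟩ := h1
  obtain ⟨hv2, c2', hc2, hd2⟩ := h2
  obtain ⟨ha1, ha2, hre⟩ := hr
  have hvr : ∀ l ∈ r, l.1 ∉ c.image Prod.fst := by
    intro l hl
    rcases Finset.mem_union.1 (by rw [← hre]; exact hl) with h | h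
    · exact hv1 l (Finset.mem_of_mem_erase h)
    · exact hv2 l (Finset.mem_of_mem_erase h)
  have hna1 : ((a, true) : Lit) ∉ c1' := fun h =>
    hv1 _ ha1 (Finset.mem_image.2 ⟨_, hc1 h, rfl⟩)
  have hna2 : ((a, false) : Lit) ∉ c2' := fun h =>
    hv2 _ ha2 (Finset.mem_image.2 ⟨_, hc2 h, rfl⟩)
  have key : (c1' ∪ r1).erase (a, true) ∪ (c2' ∪ r2).erase (a, false)
      = (c1' ∪ c2') ∪ r := by
    rw [Finset.erase_union_distrib, Finset.erase_union_distrib,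
      Finset.erase_eq_of_notMem hna1, Finset.erase_eq_of_notMem hna2, hre]
    ext l; simp only [Finset.mem_union]; tauto
  have hsub : c1' ∪ c2' ⊆ c := Finset.union_subset hc1 hc2
  have hdt : ¬ ClTaut ((c1' ∪ c2') ∪ r) := by
    rintro ⟨v, hvt, hvf⟩
    rcases Finset.mem_union.1 hvt with h | h <;> rcases Finset.mem_union.1 hvf with h' | h'
    · exact hcNT ⟨v, hsub h, hsub h'⟩
    · exact hvr _ h' (Finset.mem_image.2 ⟨_, hsub h, rfl⟩)
    · exact hvr _ h (Finset.mem_image.2 ⟨_, hsub h', rfl⟩)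
    · exact hrt ⟨v, h, h'⟩
  refine ⟨hvr, c1' ∪ c2', hsub, ?_⟩
  have hstep := Deriv.step (F := ↑F) hd1 hd2 (v := a)
    (r := (c1' ∪ r1).erase (a, true) ∪ (c2' ∪ r2).erase (a, false))
    ⟨Finset.mem_union_right _ ha1, Finset.mem_union_right _ ha2, rfl⟩
    (by rw [key]; exact hdt)
  rwa [key] at hstep

lemma complete (F : Cnf) (c : Clause) (hcNT : ¬ ClTaut c) :
    ∀ n (W : Finset ℕ) (G0 : Finset Clause),
      W.card ≤ n →
      (∀ r ∈ G0, Lift F c r) →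
      (∀ r ∈ G0, r ≠ ∅) →
      (∀ r ∈ G0, ∀ l ∈ r, l.1 ∈ W) →
      (∀ N : ℕ → Bool, ∃ r ∈ G0, ∀ l ∈ r, N l.1 = !l.2) →
      ∃ a : ℕ, Lift F c {(a, true)} ∧ Lift F c {(a, false)} := by
  intro n
  induction n with
  | zero =>
    intro W G0 hW _ hne hvars hU
    obtain ⟨r, hr, _⟩ := hU fun _ => true
    obtain ⟨l, hl⟩ := Finset.nonempty_iff_ne_empty.2 (hne r hr)
    have hmem := hvars r hr l hl
    rw [Finset.card_eq_zero.1 (Nat.le_zero.1 hW)] at hmem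
    exact absurd hmem (Finset.notMem_empty _)
  | succ n ih =>
    intro W G0 hW hlift hne hvars hU
    obtain ⟨r0, hr0, _⟩ := hU fun _ => true
    obtain ⟨l0, hl0⟩ := Finset.nonempty_iff_ne_empty.2 (hne r0 hr0)
    set a := l0.1 with ha
    have haW : a ∈ W := hvars r0 hr0 l0 hl0
    by_cases hE : ∃ r1 ∈ G0, ∃ r2 ∈ G0, ((a, true) : Lit) ∈ r1 ∧ ((a, false) : Lit) ∈ r2 ∧
        r1.erase (a, true) ∪ r2.erase (a, false) = ∅
    · obtain ⟨r1, hr1, r2, hr2, hm1, hm2, hemp⟩ := hE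
      have e1 : r1 = {((a, true) : Lit)} := by
        apply Finset.eq_singleton_iff_unique_mem.2
        refine ⟨hm1, fun x hx => ?_⟩
        by_contra hx'
        have hxe : x ∈ r1.erase (a, true) := Finset.mem_erase.2 ⟨hx', hx⟩
        have : x ∈ (∅ : Clause) := by rw [← hemp]; exact Finset.mem_union_left _ hxe
        simpa using this
      have e2 : r2 = {((a, false) : Lit)} := by
        apply Finset.eq_singleton_iff_unique_mem.2
        refine ⟨hm2, fun x hx => ?_⟩
        by_contra hx'
        have hxe : x ∈ r2.erase (a, false) := Finset.mem_erase.2 ⟨hx', hx⟩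
        have : x ∈ (∅ : Clause) := by rw [← hemp]; exact Finset.mem_union_right _ hxe
        simpa using this
      exact ⟨a, e1 ▸ hlift r1 hr1, e2 ▸ hlift r2 hr2⟩
    · push_neg at hE
      set W' := W.erase a with hW'
      set G1 := (G0 ∪ (G0 ×ˢ G0).image
          (fun p : Clause × Clause => p.1.erase (a, true) ∪ p.2.erase (a, false))).filter
        (fun r => Lift F c r ∧ r ≠ ∅ ∧ ∀ l ∈ r, l.1 ∈ W') with hG1
      apply ih W' G1
      · have hcard : W'.card = W.card - 1 := by rw [hW']; exact Finset.card_erase_of_mem haW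
        omega
      · intro r hr; exact ((Finset.mem_filter.1 hr).2).1
      · intro r hr; exact ((Finset.mem_filter.1 hr).2).2.1
      · intro r hr; exact ((Finset.mem_filter.1 hr).2).2.2
      · intro N'
        obtain ⟨rt, hrtG, hft⟩ := hU (Function.update N' a true)
        by_cases hatc : ∀ l ∈ rt, l.1 ≠ a
        · refine ⟨rt, Finset.mem_filter.2 ⟨Finset.mem_union_left _ hrtG, hlift _ hrtG,
            hne _ hrtG, fun l hl => Finset.mem_erase.2 ⟨hatc l hl, hvars _ hrtG l hl⟩⟩, ?_⟩
          intro l hl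
          have h := hft l hl
          rwa [Function.update_of_ne (hatc l hl)] at h
        · push_neg at hatc
          have hmt : ((a, false) : Lit) ∈ rt := by
            obtain ⟨l, hl, hla⟩ := hatc
            have h := hft l hl
            rw [hla, Function.update_self] at h
            have h2 : l.2 = false := by cases hb : l.2 <;> simp [hb] at h ⊢
            have : l = ((a, false) : Lit) := by rw [← hla, ← h2]
            rwa [← this]
          obtain ⟨rf, hrfG, hff⟩ := hU (Function.update N' a false)
          by_cases hafc : ∀ l ∈ rf, l.1 ≠ a
          · refine ⟨rf, Finset.mem_filter.2 ⟨Finset.mem_union_left _ hrfG, hlift _ hrfG,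
              hne _ hrfG, fun l hl => Finset.mem_erase.2 ⟨hafc l hl, hvars _ hrfG l hl⟩⟩, ?_⟩
            intro l hl
            have h := hff l hl
            rwa [Function.update_of_ne (hafc l hl)] at h
          · push_neg at hafc
            have hmf : ((a, true) : Lit) ∈ rf := by
              obtain ⟨l, hl, hla⟩ := hafc
              have h := hff l hl
              rw [hla, Function.update_self] at h
              have h2 : l.2 = true := by cases hb : l.2 <;> simp [hb] at h ⊢
              have : l = ((a, true) : Lit) := by rw [← hla, ← h2]
              rwa [← this]
            set r := rf.erase (a, true) ∪ rt.erase (a, false) with hrdef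
            have hnotA : ∀ l ∈ r, l.1 ≠ a := by
              intro l hl hla
              rcases Finset.mem_union.1 hl with h | h
              · obtain ⟨hne', hmem⟩ := Finset.mem_erase.1 h
                have hx := hff l hmem
                rw [hla, Function.update_self] at hx
                have h2 : l.2 = true := by cases hb : l.2 <;> simp [hb] at hx ⊢
                exact hne' (by rw [← hla, ← h2])
              · obtain ⟨hne', hmem⟩ := Finset.mem_erase.1 h
                have hx := hft l hmem
                rw [hla, Function.update_self] at hx
                have h2 : l.2 = false := by cases hb : l.2 <;> simp [hb] at hx ⊢
                exact hne' (by rw [← hla, ← h2])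
            have hfr : ∀ l ∈ r, N' l.1 = !l.2 := by
              intro l hl
              rcases Finset.mem_union.1 hl with h | h
              · have hx := hff l (Finset.mem_of_mem_erase h)
                rwa [Function.update_of_ne (hnotA l hl)] at hx
              · have hx := hft l (Finset.mem_of_mem_erase h)
                rwa [Function.update_of_ne (hnotA l hl)] at hx
            have hrtaut : ¬ ClTaut r := by
              rintro ⟨v, h1, h2⟩
              have e1 := hfr _ h1
              have e2 := hfr _ h2
              simp only at e1 e2
              rw [Bool.not_true] at e1
              rw [Bool.not_false] at e2
              rw [e1] at e2; exact Bool.false_ne_true e2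
            have hlr : Lift F c r :=
              lift_resolvent F c hcNT (hlift _ hrfG) (hlift _ hrtG) ⟨hmf, hmt, rfl⟩ hrtaut
            refine ⟨r, Finset.mem_filter.2 ⟨Finset.mem_union_right _
              (Finset.mem_image.2 ⟨(rf, rt), Finset.mem_product.2 ⟨hrfG, hrtG⟩, rfl⟩),
              hlr, Finset.nonempty_iff_ne_empty.1 (hE rf hrfG rt hrtG hmf hmt), ?_⟩, hfr⟩
            intro l hl
            refine Finset.mem_erase.2 ⟨hnotA l hl, ?_⟩
            rcases Finset.mem_union.1 hl with h | h
            · exact hvars _ hrfG _ (Finset.mem_of_mem_erase h)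
            · exact hvars _ hrtG _ (Finset.mem_of_mem_erase h)

lemma compactness (G : Set Clause)
    (h : ∀ N : ℕ → Bool, ∃ r ∈ G, ∀ l ∈ r, N l.1 = !l.2) :
    ∃ G0 : Finset Clause, (∀ r ∈ G0, r ∈ G) ∧
      ∀ N : ℕ → Bool, ∃ r ∈ G0, ∀ l ∈ r, N l.1 = !l.2 := by
  have hopen : ∀ r : Clause, IsOpen {N : ℕ → Bool | ∀ l ∈ r, N l.1 = !l.2} := by
    intro r
    have heq : {N : ℕ → Bool | ∀ l ∈ r, N l.1 = !l.2}
        = ⋂ l ∈ r, {N : ℕ → Bool | N l.1 = !l.2} := by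
      ext N; simp
    rw [heq]
    refine isOpen_biInter_finset fun l _ => ?_
    have heq2 : {N : ℕ → Bool | N l.1 = !l.2}
        = (fun N : ℕ → Bool => N l.1) ⁻¹' {!l.2} := rfl
    rw [heq2]
    exact (continuous_apply l.1).isOpen_preimage _ (isOpen_discrete _)
  have hcover : (Set.univ : Set (ℕ → Bool)) ⊆
      ⋃ r : G, {N : ℕ → Bool | ∀ l ∈ (r : Clause), N l.1 = !l.2} := by
    intro N _
    obtain ⟨r, hrG, hr⟩ := h N
    exact Set.mem_iUnion.2 ⟨⟨r, hrG⟩, hr⟩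
  obtain ⟨t, ht⟩ := isCompact_univ.elim_finite_subcover _ (fun r : G => hopen r) hcover
  refine ⟨t.image Subtype.val, ?_, ?_⟩
  · intro r hr
    obtain ⟨i, _, rfl⟩ := Finset.mem_image.1 hr
    exact i.2
  · intro N
    obtain ⟨i, hit, hN⟩ := Set.mem_iUnion₂.1 (ht (Set.mem_univ N))
    exact ⟨i, Finset.mem_image.2 ⟨i, hit, rfl⟩, hN⟩

/-- A clause `c` of `F` is superredundant iff `F` derives by resolution a
proper subclause of `c`, or two clauses `c1 ∨ a` and `c2 ∨ ¬a` with `a` not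
occurring in `c` and `c = c1 ∨ c2`. -/
theorem stmt14 (F : Cnf) (c : Clause) (hc : c ∈ F)
    (hNT : ∀ d ∈ F, ¬ ClTaut d) :
    superRedundant F c ↔
      ((∃ c' : Clause, Deriv ↑F c' ∧ c' ⊂ c) ∨
       (∃ (a : ℕ) (c1 c2 : Clause),
         Deriv ↑F (insert (a, true) c1) ∧ Deriv ↑F (insert (a, false) c2) ∧
         (a, true) ∉ c ∧ (a, false) ∉ c ∧ c = c1 ∪ c2)) := by
  classical
  have hcNT : ¬ ClTaut c := hNT c hc
  constructor
  · intro h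
    by_cases h1 : ∃ c' : Clause, Deriv ↑F c' ∧ c' ⊂ c
    · exact Or.inl h1
    · push_neg at h1
      right
      have hGu : ∀ N : ℕ → Bool, ∃ r, (Lift F c r ∧ r ≠ ∅) ∧ ∀ l ∈ r, N l.1 = !l.2 := by
        intro N
        set M : ℕ → Bool := fun v =>
          if v ∈ c.image Prod.fst then (if ((v, false) : Lit) ∈ c then true else false)
          else N v with hM
        have hMc : ∀ l ∈ c, M l.1 = !l.2 := by
          intro l hl
          have hlV : l.1 ∈ c.image Prod.fst := Finset.mem_image.2 ⟨l, hl, rfl⟩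
          rw [hM]
          simp only [hlV, if_true]
          cases hb : l.2 with
          | false =>
            have hmem : ((l.1, false) : Lit) ∈ c := by rw [← hb]; simpa using hl
            simp [hmem]
          | true =>
            have hmem : ((l.1, false) : Lit) ∉ c := fun hf =>
              hcNT ⟨l.1, by rw [← hb]; simpa using hl, hf⟩
            simp [hmem]
        have hMnc : ¬ clauseSat M c := by
          rintro ⟨l, hl, hsat⟩
          have hx := hMc l hl
          rw [litSat] at hsat
          rw [hsat] at hx
          cases l.2 <;> simp at hx
        have hMns : ¬ setSat M (ResCn ↑F \ {c}) := fun hs => hMnc (h M hs)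
        rw [setSat] at hMns
        push_neg at hMns
        obtain ⟨d, hd, hdns⟩ := hMns
        obtain ⟨hdD, hdne⟩ := hd
        have hdne' : d ≠ c := hdne
        have hdf : ∀ l ∈ d, M l.1 = !l.2 := by
          intro l hl
          by_contra hx
          refine hdns ⟨l, hl, ?_⟩
          rw [litSat]
          revert hx
          cases hml : M l.1 <;> cases hbl : l.2 <;> simp
        have hdc : ∀ l ∈ d, l.1 ∈ c.image Prod.fst → l ∈ c := by
          intro l hl hlV
          obtain ⟨x, hx, hx1⟩ := Finset.mem_image.1 hlV
          have hmx := hMc x hx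
          have hml := hdf l hl
          rw [hx1] at hmx
          rw [hmx] at hml
          have h2 : x.2 = l.2 := by revert hml; cases x.2 <;> cases l.2 <;> simp
          have hxl : x = l := Prod.ext hx1 h2
          rwa [← hxl]
        set r := d.filter (fun l => l.1 ∉ c.image Prod.fst) with hr
        have hrne : r ≠ ∅ := by
          intro hre
          have hdsub : d ⊆ c := by
            intro l hl
            by_cases hlV : l.1 ∈ c.image Prod.fst
            · exact hdc l hl hlV
            · have hlr : l ∈ r := by rw [hr]; exact Finset.mem_filter.2 ⟨hl, hlV⟩
              rw [hre] at hlr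
              simp at hlr
          exact h1 d hdD (ssubset_of_subset_of_ne hdsub hdne')
        refine ⟨r, ⟨⟨fun l hl => (Finset.mem_filter.1 hl).2,
          d.filter (fun l => l.1 ∈ c.image Prod.fst), ?_, ?_⟩, hrne⟩, ?_⟩
        · intro l hl
          exact hdc l (Finset.mem_filter.1 hl).1 (Finset.mem_filter.1 hl).2
        · have hsplit : d.filter (fun l => l.1 ∈ c.image Prod.fst) ∪ r = d := by
            ext l; simp [hr]; tauto
          rw [hsplit]
          exact hdD
        · intro l hl
          have hlr := Finset.mem_filter.1 hl
          have hx := hdf l hlr.1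
          simp only [hM] at hx
          rwa [if_neg hlr.2] at hx
      obtain ⟨G0, hG0sub, hG0u⟩ := compactness {r | Lift F c r ∧ r ≠ ∅}
        (by intro N; obtain ⟨r, hr, hfr⟩ := hGu N; exact ⟨r, hr, hfr⟩)
      obtain ⟨a, hl1, hl2⟩ := complete F c hcNT
        (G0.biUnion (fun r => r.image Prod.fst)).card
        (G0.biUnion (fun r => r.image Prod.fst)) G0 le_rfl
        (fun r hr => (hG0sub r hr).1) (fun r hr => (hG0sub r hr).2)
        (fun r hr l hl => Finset.mem_biUnion.2 ⟨r, hr, Finset.mem_image.2 ⟨l, hl, rfl⟩⟩)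
        hG0u
      obtain ⟨hv1, c1', hc1, hd1⟩ := hl1
      obtain ⟨hv2, c2', hc2, hd2⟩ := hl2
      have haV : a ∉ c.image Prod.fst := hv1 (a, true) (Finset.mem_singleton_self _)
      have hat : ((a, true) : Lit) ∉ c := fun hx => haV (Finset.mem_image.2 ⟨_, hx, rfl⟩)
      have haf : ((a, false) : Lit) ∉ c := fun hx => haV (Finset.mem_image.2 ⟨_, hx, rfl⟩)
      have hna1 : ((a, true) : Lit) ∉ c1' := fun hx => hat (hc1 hx)
      have hna2 : ((a, false) : Lit) ∉ c2' := fun hx => haf (hc2 hx)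
      have hd1' : Deriv ↑F (insert (a, true) c1') := by
        have he : c1' ∪ {((a, true) : Lit)} = insert (a, true) c1' := by
          ext l; simp [Finset.mem_insert, or_comm]
        rwa [he] at hd1
      have hd2' : Deriv ↑F (insert (a, false) c2') := by
        have he : c2' ∪ {((a, false) : Lit)} = insert (a, false) c2' := by
          ext l; simp [Finset.mem_insert, or_comm]
        rwa [he] at hd2
      by_cases hcc : c1' ∪ c2' = c
      · exact ⟨a, c1', c2', hd1', hd2', hat, haf, hcc.symm⟩
      · exfalso
        have key : (c1' ∪ {((a, true) : Lit)}).erase (a, true)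
            ∪ (c2' ∪ {((a, false) : Lit)}).erase (a, false) = c1' ∪ c2' := by
          rw [Finset.erase_union_distrib, Finset.erase_union_distrib,
            Finset.erase_eq_of_notMem hna1, Finset.erase_eq_of_notMem hna2]
          simp
        have hsub : c1' ∪ c2' ⊆ c := Finset.union_subset hc1 hc2
        have hnt : ¬ ClTaut (c1' ∪ c2') := fun ⟨v, hx1, hx2⟩ =>
          hcNT ⟨v, hsub hx1, hsub hx2⟩
        have hres := Deriv.step (F := (↑F : Set Clause)) hd1 hd2 (v := a)
          (r := (c1' ∪ {((a, true) : Lit)}).erase (a, true)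
            ∪ (c2' ∪ {((a, false) : Lit)}).erase (a, false))
          ⟨Finset.mem_union_right _ (Finset.mem_singleton_self _),
            Finset.mem_union_right _ (Finset.mem_singleton_self _), rfl⟩
          (by rw [key]; exact hnt)
        rw [key] at hres
        exact h1 _ hres (ssubset_of_subset_of_ne hsub hcc)
  · rintro (⟨c', hd, hsub⟩ | ⟨a, c1, c2, hd1, hd2, hat, haf, hcc⟩) <;> intro M hM
    · obtain ⟨l, hl, hsat⟩ := hM c' ⟨hd, fun he => hsub.ne he⟩
      exact ⟨l, hsub.subset hl, hsat⟩
    · have hne1 : insert ((a : ℕ), true) c1 ≠ c := fun he =>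
        hat (he ▸ Finset.mem_insert_self _ _)
      have hne2 : insert ((a : ℕ), false) c2 ≠ c := fun he =>
        haf (he ▸ Finset.mem_insert_self _ _)
      obtain ⟨l1, hl1, hs1⟩ := hM _ ⟨hd1, fun he => hne1 he⟩
      obtain ⟨l2, hl2, hs2⟩ := hM _ ⟨hd2, fun he => hne2 he⟩
      rcases Finset.mem_insert.1 hl1 with rfl | hmem1
      · rcases Finset.mem_insert.1 hl2 with rfl | hmem2
        · rw [litSat] at hs1 hs2
          simp only at hs1 hs2
          rw [hs1] at hs2
          exact absurd hs2 (by simp)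
        · exact ⟨l2, by rw [hcc]; exact Finset.mem_union_right _ hmem2, hs2⟩
      · exact ⟨l1, by rw [hcc]; exact Finset.mem_union_left _ hmem1, hs1⟩
end

section
/- If no two clauses of a CNF formula F resolve (no pair of clauses of F produces a non-tautological resolvent), then a clause of F is superredundant if and only if F contains a clause that is a strict subset of it. -/
lemma clTaut_mono {c1 c2 : Clause} (h : c1 ⊆ c2) : ClTaut c1 → ClTaut c2 := by
  rintro ⟨v, h1, h2⟩; exact ⟨v, h h1, h h2⟩

lemma clashLemma {d1 d2 : Clause} {v : ℕ}
    (hv1 : (v, true) ∈ d1) (hv2 : (v, false) ∈ d2)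
    (h1 : ¬ ClTaut d1) (h2 : ¬ ClTaut d2)
    (ht : ClTaut (d1.erase (v, true) ∪ d2.erase (v, false))) :
    ∃ w b', w ≠ v ∧ (w, b') ∈ d1 ∧ (w, !b') ∈ d2 := by
  obtain ⟨w, hwt, hwf⟩ := ht
  simp only [Finset.mem_union, Finset.mem_erase] at hwt hwf
  rcases hwt with ⟨hne1, hwt⟩ | ⟨hne1, hwt⟩ <;> rcases hwf with ⟨hne2, hwf⟩ | ⟨hne2, hwf⟩
  · exact absurd ⟨w, hwt, hwf⟩ h1
  · refine ⟨w, true, ?_, hwt, hwf⟩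
    intro h; subst h; exact hne1 rfl
  · refine ⟨w, false, ?_, hwf, by simpa using hwt⟩
    intro h; subst h; exact h2 ⟨w, hwt, hv2⟩
  · exact absurd ⟨w, hwt, hwf⟩ h2

lemma pairClash (F : Cnf) (hNT : ∀ d ∈ F, ¬ ClTaut d)
    (hnores : ∀ c1 ∈ F, ∀ c2 ∈ F, ∀ (r : Clause) (v : ℕ),
      isResolvent c1 c2 r v → ClTaut r) :
    ∀ d1 ∈ F, ∀ d2 ∈ F, ∀ v b, (v, b) ∈ d1 → (v, !b) ∈ d2 →
      ∃ w b', w ≠ v ∧ (w, b') ∈ d1 ∧ (w, !b') ∈ d2 := by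
  intro d1 h1 d2 h2 v b hb1 hb2
  cases b with
  | true =>
    have hb2' : (v, false) ∈ d2 := by simpa using hb2
    have ht := hnores d1 h1 d2 h2 (d1.erase (v, true) ∪ d2.erase (v, false)) v
      ⟨hb1, hb2', rfl⟩
    exact clashLemma hb1 hb2' (hNT d1 h1) (hNT d2 h2) ht
  | false =>
    have hb2' : (v, true) ∈ d2 := by simpa using hb2
    have ht := hnores d2 h2 d1 h1 (d2.erase (v, true) ∪ d1.erase (v, false)) v
      ⟨hb2', hb1, rfl⟩
    obtain ⟨w, b', hw, hw2, hw1⟩ :=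
      clashLemma hb2' hb1 (hNT d2 h2) (hNT d1 h1) ht
    exact ⟨w, !b', hw, hw1, by simpa using hw2⟩

lemma satLemma : ∀ (n : ℕ) (S : Finset Clause), S.card ≤ n →
    (∀ d ∈ S, d.Nonempty) → (∀ d ∈ S, ¬ ClTaut d) →
    (∀ d1 ∈ S, ∀ d2 ∈ S, ∀ v b, (v, b) ∈ d1 → (v, !b) ∈ d2 →
      ∃ w b', w ≠ v ∧ (w, b') ∈ d1 ∧ (w, !b') ∈ d2) →
    ∃ M : ℕ → Bool, ∀ d ∈ S, clauseSat M d := by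
  intro n
  induction n with
  | zero =>
    intro S hcard _ _ _
    have : S = ∅ := Finset.card_eq_zero.mp (Nat.le_zero.mp hcard)
    subst this
    exact ⟨fun _ => true, fun d hd => absurd hd (Finset.notMem_empty d)⟩
  | succ n ih =>
    intro S hcard hne hnt hclash
    rcases S.eq_empty_or_nonempty with rfl | ⟨d0, hd0⟩
    · exact ⟨fun _ => true, fun d hd => absurd hd (Finset.notMem_empty d)⟩
    obtain ⟨⟨v, b⟩, hvb⟩ := hne d0 hd0
    set T := S.filter (fun e => (v, b) ∉ e) with hT
    have hTsub : T ⊆ S := Finset.filter_subset _ _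
    have hd0T : d0 ∉ T := by
      simp only [hT, Finset.mem_filter]; tauto
    have hTcard : T.card < S.card :=
      Finset.card_lt_card ⟨hTsub, fun hsub => hd0T (hsub hd0)⟩
    set S' := T.image (fun e => e.erase (v, !b)) with hS'
    have hS'card : S'.card ≤ n := by
      have h1 : S'.card ≤ T.card := Finset.card_image_le
      omega
    have hmemT : ∀ e ∈ T, e ∈ S ∧ (v, b) ∉ e := by
      intro e he; simpa [hT, Finset.mem_filter] using he
    -- auxiliary: survival of clash witnesses
    have hsurv : ∀ e1 ∈ T, ∀ e2 ∈ T, ∀ w b', w ≠ v → (w, b') ∈ e1 → (w, !b') ∈ e2 →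
        (w, b') ∈ e1.erase (v, !b) ∧ (w, !b') ∈ e2.erase (v, !b) := by
      intro e1 _ e2 _ w b' hw hm1 hm2
      constructor
      · exact Finset.mem_erase.mpr ⟨by simp [Prod.ext_iff, hw], hm1⟩
      · exact Finset.mem_erase.mpr ⟨by simp [Prod.ext_iff, hw], hm2⟩
    have hne' : ∀ d ∈ S', d.Nonempty := by
      intro d hd
      obtain ⟨e, heT, rfl⟩ := Finset.mem_image.mp hd
      obtain ⟨heS, hbe⟩ := hmemT e heT
      by_cases hvbe : (v, !b) ∈ e
      · obtain ⟨w, b', hw, hm1, hm2⟩ :=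
          hclash e heS d0 hd0 v (!b) hvbe (by simpa using hvb)
        exact ⟨(w, b'), Finset.mem_erase.mpr ⟨by simp [Prod.ext_iff, hw], hm1⟩⟩
      · rw [Finset.erase_eq_of_notMem hvbe]
        exact hne e heS
    have hnt' : ∀ d ∈ S', ¬ ClTaut d := by
      intro d hd
      obtain ⟨e, heT, rfl⟩ := Finset.mem_image.mp hd
      exact fun h => hnt e (hmemT e heT).1 (clTaut_mono (Finset.erase_subset _ _) h)
    have hclash' : ∀ d1 ∈ S', ∀ d2 ∈ S', ∀ u b'', (u, b'') ∈ d1 → (u, !b'') ∈ d2 →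
        ∃ w b', w ≠ u ∧ (w, b') ∈ d1 ∧ (w, !b') ∈ d2 := by
      intro d1 hd1 d2 hd2 u b'' hm1 hm2
      obtain ⟨e1, he1T, rfl⟩ := Finset.mem_image.mp hd1
      obtain ⟨e2, he2T, rfl⟩ := Finset.mem_image.mp hd2
      obtain ⟨he1S, hb1⟩ := hmemT e1 he1T
      obtain ⟨he2S, hb2⟩ := hmemT e2 he2T
      obtain ⟨w, b', hwu, hw1, hw2⟩ :=
        hclash e1 he1S e2 he2S u b'' (Finset.mem_of_mem_erase hm1)
          (Finset.mem_of_mem_erase hm2)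
      have hwv : w ≠ v := by
        intro h; subst h
        cases b' with
        | true =>
          cases b with
          | true => exact hb1 hw1
          | false => exact hb2 (by simpa using hw2)
        | false =>
          cases b with
          | true => exact hb2 (by simpa using hw2)
          | false => exact hb1 hw1
      obtain ⟨hs1, hs2⟩ := hsurv e1 he1T e2 he2T w b' hwv hw1 hw2
      exact ⟨w, b', hwu, hs1, hs2⟩
    obtain ⟨M0, hM0⟩ := ih S' hS'card hne' hnt' hclash'
    refine ⟨fun x => if x = v then b else M0 x, ?_⟩
    intro d hd
    by_cases hvd : (v, b) ∈ d
    · exact ⟨(v, b), hvd, by simp [litSat]⟩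
    · have hdT : d ∈ T := Finset.mem_filter.mpr ⟨hd, hvd⟩
      obtain ⟨⟨w, b'⟩, hw', hsat⟩ :=
        hM0 (d.erase (v, !b)) (Finset.mem_image_of_mem _ hdT)
      have hwd : (w, b') ∈ d := Finset.mem_of_mem_erase hw'
      have hwv : w ≠ v := by
        intro h; subst h
        cases b' with
        | true =>
          cases b with
          | true => exact hvd hwd
          | false => exact (Finset.mem_erase.mp hw').1 (by simp)
        | false =>
          cases b with
          | true => exact (Finset.mem_erase.mp hw').1 (by simp)
          | false => exact hvd hwd
      refine ⟨(w, b'), hwd, ?_⟩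
      simpa [litSat, hwv] using hsat

lemma rescn_eq (F : Cnf)
    (hnores : ∀ c1 ∈ F, ∀ c2 ∈ F, ∀ (r : Clause) (v : ℕ),
      isResolvent c1 c2 r v → ClTaut r) :
    ResCn ↑F = (↑F : Set Clause) := by
  ext d
  constructor
  · intro h
    induction h with
    | base h => exact h
    | step h1 h2 hr hn ih1 ih2 => exact absurd (hnores _ ih1 _ ih2 _ _ hr) hn
  · exact Deriv.base

/-- If no two clauses of `F` resolve (all resolvents are tautological), then a
clause of `F` is superredundant iff `F` contains a strict subset of it. -/
theorem stmt15 (F : Cnf) (hNT : ∀ d ∈ F, ¬ ClTaut d)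
    (hnores : ∀ c1 ∈ F, ∀ c2 ∈ F, ∀ (r : Clause) (v : ℕ),
      isResolvent c1 c2 r v → ClTaut r)
    (c : Clause) (hc : c ∈ F) :
    superRedundant F c ↔ ∃ c' ∈ F, c' ⊂ c := by
  have hres := rescn_eq F hnores
  constructor
  · -- superredundant → strict subset exists
    intro hsr
    by_contra hno
    push_neg at hno
    have hcnt : ¬ ClTaut c := hNT c hc
    -- reduced clauses
    set T := F.filter (fun d => d ≠ c ∧ ¬ ∃ l ∈ d, l.negate ∈ c) with hT
    set S' := T.image (fun d => d \ c) with hS'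
    have hmemT : ∀ d ∈ T, d ∈ F ∧ d ≠ c ∧ ¬ ∃ l ∈ d, l.negate ∈ c := by
      intro d hd; simpa [hT, Finset.mem_filter] using hd
    have hne' : ∀ d ∈ S', d.Nonempty := by
      intro d hd
      obtain ⟨e, heT, rfl⟩ := Finset.mem_image.mp hd
      obtain ⟨heF, hec, _⟩ := hmemT e heT
      rw [Finset.sdiff_nonempty]
      intro hsub
      exact hno e heF ⟨hsub, fun h => hec (Finset.Subset.antisymm hsub h)⟩
    have hnt' : ∀ d ∈ S', ¬ ClTaut d := by
      intro d hd
      obtain ⟨e, heT, rfl⟩ := Finset.mem_image.mp hd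
      exact fun h =>
        hNT e (hmemT e heT).1 (clTaut_mono (Finset.sdiff_subset) h)
    have hclash := pairClash F hNT hnores
    have hclash' : ∀ d1 ∈ S', ∀ d2 ∈ S', ∀ u b'', (u, b'') ∈ d1 → (u, !b'') ∈ d2 →
        ∃ w b', w ≠ u ∧ (w, b') ∈ d1 ∧ (w, !b') ∈ d2 := by
      intro d1 hd1 d2 hd2 u b'' hm1 hm2
      obtain ⟨e1, he1T, rfl⟩ := Finset.mem_image.mp hd1
      obtain ⟨e2, he2T, rfl⟩ := Finset.mem_image.mp hd2
      obtain ⟨he1F, _, hneg1⟩ := hmemT e1 he1T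
      obtain ⟨he2F, _, hneg2⟩ := hmemT e2 he2T
      obtain ⟨w, b', hwu, hw1, hw2⟩ :=
        hclash e1 he1F e2 he2F u b'' (Finset.mem_sdiff.mp hm1).1
          (Finset.mem_sdiff.mp hm2).1
      refine ⟨w, b', hwu, Finset.mem_sdiff.mpr ⟨hw1, ?_⟩,
        Finset.mem_sdiff.mpr ⟨hw2, ?_⟩⟩
      · intro hwc
        exact hneg2 ⟨(w, !b'), hw2, by simpa [Lit.negate] using hwc⟩
      · intro hwc
        exact hneg1 ⟨(w, b'), hw1, by simpa [Lit.negate] using hwc⟩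
    obtain ⟨M0, hM0⟩ := satLemma S'.card S' le_rfl hne' hnt' hclash'
    set M : ℕ → Bool := fun x =>
      if (x, true) ∈ c then false else if (x, false) ∈ c then true else M0 x
      with hM
    -- M falsifies c
    have hfals : ¬ clauseSat M c := by
      rintro ⟨⟨w, bw⟩, hwc, hws⟩
      cases bw with
      | true => simp [litSat, hM, hwc] at hws
      | false =>
        have : (w, true) ∉ c := fun h => hcnt ⟨w, h, hwc⟩
        simp [litSat, hM, this, hwc] at hws
    -- M satisfies every clause of F other than c
    have hsat : setSat M ((↑F : Set Clause) \ {c}) := by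
      rintro d ⟨hdF, hdc⟩
      simp only [Set.mem_singleton_iff] at hdc
      by_cases hnegd : ∃ l ∈ d, l.negate ∈ c
      · obtain ⟨⟨w, bw⟩, hwd, hwc⟩ := hnegd
        simp only [Lit.negate] at hwc
        refine ⟨(w, bw), hwd, ?_⟩
        cases bw with
        | true =>
          have : (w, true) ∉ c := fun h => hcnt ⟨w, h, by simpa using hwc⟩
          simp [litSat, hM, this, show (w, false) ∈ c by simpa using hwc]
        | false => simp [litSat, hM, show (w, true) ∈ c by simpa using hwc]
      · have hdT : d ∈ T := Finset.mem_filter.mpr ⟨hdF, hdc, hnegd⟩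
        obtain ⟨⟨w, bw⟩, hw', hws⟩ :=
          hM0 (d \ c) (Finset.mem_image_of_mem _ hdT)
        obtain ⟨hwd, hwc⟩ := Finset.mem_sdiff.mp hw'
        have hwnc : (w, !bw) ∉ c := fun h =>
          hnegd ⟨(w, bw), hwd, by simpa [Lit.negate] using h⟩
        refine ⟨(w, bw), hwd, ?_⟩
        cases bw with
        | true => simpa [litSat, hM, hwc, show (w, false) ∉ c by simpa using hwnc]
            using hws
        | false => simpa [litSat, hM, hwc, show (w, true) ∉ c by simpa using hwnc]
            using hws
    have hsat' : setSat M (ResCn ↑F \ {c}) := by rw [hres]; exact hsat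
    exact hfals (hsr M hsat')
  · -- strict subset → superredundant
    rintro ⟨c', hc'F, hc'sub⟩
    intro M hM
    have hc'mem : c' ∈ ResCn ↑F \ {c} := by
      refine ⟨Deriv.base (by exact_mod_cast hc'F), ?_⟩
      simp only [Set.mem_singleton_iff]
      exact fun h => (ne_of_lt hc'sub) h
    obtain ⟨l, hl, hls⟩ := hM c' hc'mem
    exact ⟨l, hc'sub.1 hl, hls⟩
end

section
/- A clause c of a CNF formula F is superredundant if and only if (F \ {c}) ∪ resolve(c, F) entails c, where resolve(c, F) is the set of all non-tautological resolvents of c with clauses of F. -/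
def resolveSet (c : Clause) (F : Cnf) : Set Clause :=
  {r : Clause | ∃ d ∈ F, ∃ v : ℕ,
    (isResolvent c d r v ∨ isResolvent d c r v) ∧ ¬ ClTaut r}

lemma sat_of_taut (M : ℕ → Bool) {e : Clause} (h : ClTaut e) : clauseSat M e := by
  obtain ⟨v, h1, h2⟩ := h
  cases hv : M v
  · exact ⟨(v, false), h2, hv⟩
  · exact ⟨(v, true), h1, hv⟩

/-- A clause `c` of `F` is superredundant iff `(F \ {c}) ∪ resolve(c, F)`
entails `c`. -/
theorem stmt16 (F : Cnf) (c : Clause) (hc : c ∈ F)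
    (hNT : ∀ d ∈ F, ¬ ClTaut d) :
    superRedundant F c ↔
      setEntails (((↑F : Set Clause) \ {c}) ∪ resolveSet c F) c := by
  constructor
  · -- superredundant → G entails c
    intro hSR M hM
    by_contra hMc
    have hMc' : ∀ l ∈ c, ¬ litSat M l := fun l hl hs => hMc ⟨l, hl, hs⟩
    have hGF : ∀ d ∈ F, d ≠ c → clauseSat M d := by
      intro d hd hdc
      exact hM d (Or.inl ⟨Finset.mem_coe.2 hd, by simpa using hdc⟩)
    have hGr : ∀ r ∈ resolveSet c F, clauseSat M r := fun r hr => hM r (Or.inr hr)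
    have key : ∀ e, Deriv (↑F) e →
        ((∀ m ∈ e, ¬ litSat M m) → e = c) ∧
        (∀ l : Lit, l.negate ∈ c → l ∈ e →
          (∀ m ∈ e, m ≠ l → ¬ litSat M m) → litSat M l → False) := by
      intro e he
      induction he with
      | @base d hd =>
        have hdF : d ∈ F := Finset.mem_coe.1 hd
        constructor
        · intro hfals
          by_contra hne
          obtain ⟨m, hm, hsat⟩ := hGF d hdF hne
          exact hfals m hm hsat
        · intro l hlc hle hoth hlsat
          by_cases hdc : d = c
          · exact hMc' l (hdc ▸ hle) hlsat
          · obtain ⟨v, b⟩ := l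
            cases b
            · -- l = (v, false), l.negate = (v, true) ∈ c
              have hlc' : (v, true) ∈ c := by simpa [Lit.negate] using hlc
              set r' := c.erase (v, true) ∪ d.erase (v, false) with hr'
              have hfals : ∀ m ∈ r', ¬ litSat M m := by
                intro m hm
                rcases Finset.mem_union.1 hm with h | h
                · exact hMc' m (Finset.mem_of_mem_erase h)
                · exact hoth m (Finset.mem_of_mem_erase h) (Finset.ne_of_mem_erase h)
              have hnt : ¬ ClTaut r' := by
                intro ht
                obtain ⟨m, hm, hs⟩ := sat_of_taut M ht
                exact hfals m hm hs
              have hmem : r' ∈ resolveSet c F :=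
                ⟨d, hdF, v, Or.inl ⟨hlc', hle, rfl⟩, hnt⟩
              obtain ⟨m, hm, hs⟩ := hGr r' hmem
              exact hfals m hm hs
            · -- l = (v, true), l.negate = (v, false) ∈ c
              have hlc' : (v, false) ∈ c := by simpa [Lit.negate] using hlc
              set r' := d.erase (v, true) ∪ c.erase (v, false) with hr'
              have hfals : ∀ m ∈ r', ¬ litSat M m := by
                intro m hm
                rcases Finset.mem_union.1 hm with h | h
                · exact hoth m (Finset.mem_of_mem_erase h) (Finset.ne_of_mem_erase h)
                · exact hMc' m (Finset.mem_of_mem_erase h)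
              have hnt : ¬ ClTaut r' := by
                intro ht
                obtain ⟨m, hm, hs⟩ := sat_of_taut M ht
                exact hfals m hm hs
              have hmem : r' ∈ resolveSet c F :=
                ⟨d, hdF, v, Or.inr ⟨hle, hlc', rfl⟩, hnt⟩
              obtain ⟨m, hm, hs⟩ := hGr r' hmem
              exact hfals m hm hs
      | @step c1 c2 r v hd1 hd2 hres hnt ih1 ih2 =>
        obtain ⟨hv1, hv2, hrEq⟩ := hres
        constructor
        · intro hfals
          cases hMv : M v
          · -- M v = false : c1 fully falsified, c2 almost-falsified at (v,false)
            have hf1 : ∀ m ∈ c1, ¬ litSat M m := by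
              intro m hm hsat
              by_cases hmv : m = (v, true)
              · subst hmv; simp [litSat, hMv] at hsat
              · exact hfals m (hrEq ▸ Finset.mem_union_left _
                  (Finset.mem_erase.2 ⟨hmv, hm⟩)) hsat
            have hc1c : c1 = c := ih1.1 hf1
            exact (ih2.2 (v, false) (by simpa [Lit.negate] using hc1c ▸ hv1) hv2
              (fun m hm hml => hfals m (hrEq ▸ Finset.mem_union_right _
                (Finset.mem_erase.2 ⟨hml, hm⟩)))
              (by simpa [litSat] using hMv)).elim
          · -- M v = true
            have hf2 : ∀ m ∈ c2, ¬ litSat M m := by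
              intro m hm hsat
              by_cases hmv : m = (v, false)
              · subst hmv; simp [litSat, hMv] at hsat
              · exact hfals m (hrEq ▸ Finset.mem_union_right _
                  (Finset.mem_erase.2 ⟨hmv, hm⟩)) hsat
            have hc2c : c2 = c := ih2.1 hf2
            exact (ih1.2 (v, true) (by simpa [Lit.negate] using hc2c ▸ hv2) hv1
              (fun m hm hml => hfals m (hrEq ▸ Finset.mem_union_left _
                (Finset.mem_erase.2 ⟨hml, hm⟩)))
              (by simpa [litSat] using hMv)).elim
        · intro l hlc hlr hoth hlsat
          rw [hrEq] at hlr
          cases hMv : M v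
          · -- M v = false; (v,true) is falsified, l ≠ (v,true)
            by_cases hl1 : l ∈ c1.erase (v, true)
            · refine ih1.2 l hlc (Finset.mem_of_mem_erase hl1) ?_ hlsat
              intro m hm hml
              by_cases hmv : m = (v, true)
              · subst hmv; intro hs; simp [litSat, hMv] at hs
              · exact hoth m (hrEq ▸ Finset.mem_union_left _
                  (Finset.mem_erase.2 ⟨hmv, hm⟩)) hml
            · have hl2 : l ∈ c2.erase (v, false) := (Finset.mem_union.1 hlr).resolve_left hl1
              have hf1 : ∀ m ∈ c1, ¬ litSat M m := by
                intro m hm hsat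
                by_cases hmv : m = (v, true)
                · subst hmv; simp [litSat, hMv] at hsat
                · have hme : m ∈ c1.erase (v, true) := Finset.mem_erase.2 ⟨hmv, hm⟩
                  have hml : m ≠ l := fun h => hl1 (h ▸ hme)
                  exact hoth m (hrEq ▸ Finset.mem_union_left _ hme) hml hsat
              have hc1c : c1 = c := ih1.1 hf1
              have hneg1 : l.negate ∈ c1 := hc1c ▸ hlc
              have hneq : l.negate ≠ (v, true) := by
                intro h
                have hl : l = (v, false) := by
                  obtain ⟨w, b⟩ := l
                  simp [Lit.negate, Prod.ext_iff] at h
                  simp [h.1, h.2]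
                exact (Finset.mem_erase.1 hl2).1 hl
              have hnegr : l.negate ∈ r :=
                hrEq ▸ Finset.mem_union_left _ (Finset.mem_erase.2 ⟨hneq, hneg1⟩)
              have hlr' : l ∈ r := hrEq ▸ hlr
              refine hnt ⟨l.1, ?_, ?_⟩
              · cases hb : l.2
                · simpa [Lit.negate, hb] using hnegr
                · have : l = (l.1, true) := by rw [← hb]
                  exact this ▸ hlr'
              · cases hb : l.2
                · have : l = (l.1, false) := by rw [← hb]
                  exact this ▸ hlr'
                · simpa [Lit.negate, hb] using hnegr
          · -- M v = true
            by_cases hl2 : l ∈ c2.erase (v, false)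
            · refine ih2.2 l hlc (Finset.mem_of_mem_erase hl2) ?_ hlsat
              intro m hm hml
              by_cases hmv : m = (v, false)
              · subst hmv; intro hs; simp [litSat, hMv] at hs
              · exact hoth m (hrEq ▸ Finset.mem_union_right _
                  (Finset.mem_erase.2 ⟨hmv, hm⟩)) hml
            · have hl1 : l ∈ c1.erase (v, true) := (Finset.mem_union.1 hlr).resolve_right hl2
              have hf2 : ∀ m ∈ c2, ¬ litSat M m := by
                intro m hm hsat
                by_cases hmv : m = (v, false)
                · subst hmv; simp [litSat, hMv] at hsat
                · have hme : m ∈ c2.erase (v, false) := Finset.mem_erase.2 ⟨hmv, hm⟩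
                  have hml : m ≠ l := fun h => hl2 (h ▸ hme)
                  exact hoth m (hrEq ▸ Finset.mem_union_right _ hme) hml hsat
              have hc2c : c2 = c := ih2.1 hf2
              have hneg2 : l.negate ∈ c2 := hc2c ▸ hlc
              have hneq : l.negate ≠ (v, false) := by
                intro h
                have hl : l = (v, true) := by
                  obtain ⟨w, b⟩ := l
                  simp [Lit.negate, Prod.ext_iff] at h
                  simp [h.1, h.2]
                exact (Finset.mem_erase.1 hl1).1 hl
              have hnegr : l.negate ∈ r :=
                hrEq ▸ Finset.mem_union_right _ (Finset.mem_erase.2 ⟨hneq, hneg2⟩)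
              have hlr' : l ∈ r := hrEq ▸ hlr
              refine hnt ⟨l.1, ?_, ?_⟩
              · cases hb : l.2
                · simpa [Lit.negate, hb] using hnegr
                · have : l = (l.1, true) := by rw [← hb]
                  exact this ▸ hlr'
              · cases hb : l.2
                · have : l = (l.1, false) := by rw [← hb]
                  exact this ▸ hlr'
                · simpa [Lit.negate, hb] using hnegr
    have hsetsat : setSat M (ResCn ↑F \ {c}) := by
      intro e he
      obtain ⟨hd, hne⟩ := he
      by_contra hns
      exact hne (by simpa using (key e hd).1 (fun m hm hs => hns ⟨m, hm, hs⟩))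
    exact hMc (hSR M hsetsat)
  · -- G entails c → superredundant
    intro hG M hM
    apply hG M
    intro d hd
    rcases hd with ⟨hdF, hdc⟩ | hdR
    · exact hM d ⟨Deriv.base hdF, by simpa using hdc⟩
    · obtain ⟨e, heF, v, hres, hnt⟩ := hdR
      have hde : Deriv (↑F : Set Clause) d := by
        rcases hres with h | h
        · exact Deriv.step (Deriv.base (Finset.mem_coe.2 hc))
            (Deriv.base (Finset.mem_coe.2 heF)) h hnt
        · exact Deriv.step (Deriv.base (Finset.mem_coe.2 heF))
            (Deriv.base (Finset.mem_coe.2 hc)) h hnt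
      have hdc : d ≠ c := by
        intro hdc
        subst hdc
        rcases hres with ⟨hv1, hv2, hrEq⟩ | ⟨hv1, hv2, hrEq⟩
        · have : (v, true) ∈ e.erase (v, false) := by
            rcases Finset.mem_union.1 (hrEq ▸ hv1) with h | h
            · exact absurd rfl (Finset.mem_erase.1 h).1
            · exact h
          exact hNT e heF ⟨v, Finset.mem_of_mem_erase this, hv2⟩
        · have : (v, false) ∈ e.erase (v, true) := by
            rcases Finset.mem_union.1 (hrEq ▸ hv2) with h | h
            · exact h
            · exact absurd rfl (Finset.mem_erase.1 h).1
          exact hNT e heF ⟨v, hv1, Finset.mem_of_mem_erase this⟩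
      exact hM d ⟨hde, by simpa using hdc⟩
end

section
/- If the literal l does not occur in any clause of the CNF formula F and F ∪ {l} is satisfiable, then the unit clause {l} is superirredundant in F ∪ {l}. -/
lemma res_sound {N : ℕ → Bool} {c1 c2 r : Clause} {v : ℕ}
    (h1 : clauseSat N c1) (h2 : clauseSat N c2) (hr : isResolvent c1 c2 r v) :
    clauseSat N r := by
  obtain ⟨hv1, hv2, hre⟩ := hr
  subst hre
  cases hN : N v with
  | true =>
    obtain ⟨w, hw, hws⟩ := h2
    refine ⟨w, ?_, hws⟩
    apply Finset.mem_union_right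
    refine Finset.mem_erase.2 ⟨?_, hw⟩
    rintro rfl; simp [litSat] at hws; simp [hws] at hN
  | false =>
    obtain ⟨w, hw, hws⟩ := h1
    refine ⟨w, ?_, hws⟩
    apply Finset.mem_union_left
    refine Finset.mem_erase.2 ⟨?_, hw⟩
    rintro rfl; simp [litSat] at hws; simp [hws] at hN

/-- If the literal `l` does not occur in `F` and `F ∪ {l}` is satisfiable, then
the unit clause `{l}` is superirredundant in `F ∪ {l}`. -/
theorem stmt18 (F : Cnf) (l : Lit)
    (hNT : ∀ c ∈ F, ¬ ClTaut c)
    (hocc : ∀ c ∈ F, l ∉ c)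
    (hsat : ∃ M, cnfSat M (insert ({l} : Clause) F)) :
    ¬ superRedundant (insert ({l} : Clause) F) ({l} : Clause) := by
  intro hsr
  obtain ⟨M, hM⟩ := hsat
  set M' : ℕ → Bool := fun v => if v = l.1 then !l.2 else M v with hM'def
  have hMl : litSat M l := by
    obtain ⟨w, hw, hws⟩ := hM ({l} : Clause) (Finset.mem_insert_self _ _)
    simp only [Finset.mem_singleton] at hw; subst hw; exact hws
  have hM'l : ¬ litSat M' l := by
    simp only [litSat, hM'def]
    simp
  -- invariant
  have key : ∀ c, Deriv (↑(insert ({l} : Clause) F)) c →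
      c = ({l} : Clause) ∨ (l ∉ c ∧ clauseSat M c ∧ clauseSat M' c) := by
    intro c hc
    induction hc with
    | base hcF =>
      rename_i c
      simp only [Finset.coe_insert, Set.mem_insert_iff, Finset.mem_coe] at hcF
      rcases hcF with rfl | hcF
      · exact Or.inl rfl
      · refine Or.inr ⟨hocc c hcF, hM c (Finset.mem_insert_of_mem hcF), ?_⟩
        obtain ⟨w, hw, hws⟩ := hM c (Finset.mem_insert_of_mem hcF)
        refine ⟨w, hw, ?_⟩
        by_cases hwv : w.1 = l.1
        · have hwl : w ≠ l := fun h => hocc c hcF (h ▸ hw)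
          have : w.2 = !l.2 := by
            cases hb : w.2 <;> cases hb2 : l.2 <;> simp_all
            · exact hwl (Prod.ext hwv (by rw [hb, hb2]))
            · exact hwl (Prod.ext hwv (by rw [hb, hb2]))
          simp [litSat, hM'def, hwv, this]
        · simpa [litSat, hM'def, hwv] using hws
    | step hd1 hd2 hres htaut ih1 ih2 =>
      rename_i c1 c2 r v
      obtain ⟨hv1, hv2, hre⟩ := hres
      rcases ih1 with rfl | ⟨hl1, hMs1, hM's1⟩
      · -- c1 = {l}, so l = (v, true)
        have hlv : l = (v, true) := by
          have := hv1; simp only [Finset.mem_singleton] at this; exact this.symm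
        rcases ih2 with rfl | ⟨hl2, hMs2, hM's2⟩
        · exfalso
          have : l = (v, false) := by
            have := hv2; simp only [Finset.mem_singleton] at this; exact this.symm
          rw [hlv] at this; exact absurd (congrArg Prod.snd this) (by simp)
        · right
          obtain ⟨w, hw, hws⟩ := hMs2
          have hwne : w ≠ (v, false) := by
            rintro rfl
            rw [hlv] at hMl
            simp [litSat] at hMl hws
            rw [hMl] at hws; exact absurd hws (by simp)
          have hwnl : w ≠ l := fun h => hl2 (h ▸ hw)
          have hwv : w.1 ≠ v := by
            intro h
            rcases w with ⟨wv, wb⟩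
            cases wb
            · exact hwne (by simp [h] at *; exact h)
            · exact hwnl (by rw [hlv]; simp [h] at *; exact h)
          have hwr : w ∈ r := by
            rw [hre]
            exact Finset.mem_union_right _ (Finset.mem_erase.2 ⟨hwne, hw⟩)
          refine ⟨?_, ⟨w, hwr, hws⟩, ⟨w, hwr, ?_⟩⟩
          · intro hlr
            rw [hre] at hlr
            rcases Finset.mem_union.1 hlr with h | h
            · exact (Finset.mem_erase.1 h).1 hlv
            · exact hl2 (Finset.mem_of_mem_erase h)
          · have : w.1 ≠ l.1 := by rw [hlv]; exact hwv
            simpa [litSat, hM'def, this] using hws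
      · rcases ih2 with rfl | ⟨hl2, hMs2, hM's2⟩
        · -- c2 = {l}, so l = (v, false)
          right
          have hlv : l = (v, false) := by
            have := hv2; simp only [Finset.mem_singleton] at this; exact this.symm
          obtain ⟨w, hw, hws⟩ := hMs1
          have hwne : w ≠ (v, true) := by
            rintro rfl
            rw [hlv] at hMl
            simp [litSat] at hMl hws
            rw [hMl] at hws; exact absurd hws (by simp)
          have hwnl : w ≠ l := fun h => hl1 (h ▸ hw)
          have hwv : w.1 ≠ v := by
            intro h
            rcases w with ⟨wv, wb⟩
            cases wb
            · exact hwnl (by rw [hlv]; simp [h] at *; exact h)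
            · exact hwne (by simp [h] at *; exact h)
          have hwr : w ∈ r := by
            rw [hre]
            exact Finset.mem_union_left _ (Finset.mem_erase.2 ⟨hwne, hw⟩)
          refine ⟨?_, ⟨w, hwr, hws⟩, ⟨w, hwr, ?_⟩⟩
          · intro hlr
            rw [hre] at hlr
            rcases Finset.mem_union.1 hlr with h | h
            · exact hl1 (Finset.mem_of_mem_erase h)
            · exact (Finset.mem_erase.1 h).1 hlv
          · have : w.1 ≠ l.1 := by rw [hlv]; exact hwv
            simpa [litSat, hM'def, this] using hws
        · right
          refine ⟨?_, res_sound hMs1 hMs2 ⟨hv1, hv2, hre⟩,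
              res_sound hM's1 hM's2 ⟨hv1, hv2, hre⟩⟩
          intro hlr
          rw [hre] at hlr
          rcases Finset.mem_union.1 hlr with h | h
          · exact hl1 (Finset.mem_of_mem_erase h)
          · exact hl2 (Finset.mem_of_mem_erase h)
  -- conclude
  have hsat' : setSat M' (ResCn ↑(insert ({l} : Clause) F) \ {({l} : Clause)}) := by
    intro c hc
    obtain ⟨hcR, hcne⟩ := hc
    rcases key c hcR with rfl | ⟨_, _, h⟩
    · exact absurd rfl hcne
    · exact h
  obtain ⟨w, hw, hws⟩ := hsr M' hsat'
  simp only [Finset.mem_singleton] at hw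
  exact hM'l (hw ▸ hws)
end
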